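/- arXiv:2511.15508 — 8 statements merged into one kernel-verified Lean document; each statement's English description precedes it below -/
import Mathlib

section
/- Let k ≥ 3 and n > 2k be integers and let F ⊆ \binom{[n]}{k} be an intersecting family. Then the second largest degree satisfies d_2(F) ≤ \binom{n-2}{k-2} + \binom{n-3}{k-2}. -/
open Finset

/-- The degree of `x` in the family `F`: the number of members of `F` containing `x`. -/
def degree (F : Finset (Finset ℕ)) (x : ℕ) : ℕ :=
  (F.filter fun A => x ∈ A).card

/-- The `i`-th largest degree (1-indexed) of the family `F` on ground set `[n] = {1, …, n}`:
the `i`-th entry of the list of degrees of all `n` elements arranged in nonincreasing order. -/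
def nthDegree (n : ℕ) (F : Finset (Finset ℕ)) (i : ℕ) : ℕ :=
  (((Finset.Icc 1 n).val.map (degree F)).sort (· ≥ ·)).getD (i - 1) 0

open FinsetFamily in
attribute [-instance] instDecidableEqFin in
lemma cross_bound {m ℓ : ℕ} (hℓ : 1 ≤ ℓ) (hm : 2 * ℓ < m)
    (𝒜 ℬ : Finset (Finset (Fin m)))
    (h𝒜s : (𝒜 : Set (Finset (Fin m))).Sized ℓ)
    (hℬs : (ℬ : Set (Finset (Fin m))).Sized ℓ)
    (hcross : ∀ A ∈ 𝒜, ∀ B ∈ ℬ, ¬ Disjoint A B)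
    (hbig : (m - 1).choose (ℓ - 1) < 𝒜.card) :
    ℬ.card ≤ (m - 1).choose (ℓ - 1) := by
  set S := ∂^[m - 2 * ℓ] 𝒜ᶜˢ with hS
  have hdisj : Disjoint ℬ S := by
    rw [disjoint_right]
    intro B hB1 hB2
    rw [hS, mem_shadow_iterate_iff_exists_sdiff] at hB1
    obtain ⟨C, hC, hBC, -⟩ := hB1
    rw [mem_compls] at hC
    exact hcross _ hC _ hB2 (disjoint_of_subset_right hBC disjoint_compl_left)
  have hcompls : (𝒜ᶜˢ : Set (Finset (Fin m))).Sized (m - ℓ) := by simpa using h𝒜s.compls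
  have hbig' : (m - 1).choose (m - ℓ) ≤ 𝒜ᶜˢ.card := by
    rw [card_compls]
    have h1 : (m - 1).choose (m - ℓ) = (m - 1).choose (ℓ - 1) := by
      rw [show m - ℓ = (m - 1) - (ℓ - 1) by omega]
      exact Nat.choose_symm (by omega)
    rw [h1]; exact hbig.le
  have hkk := kruskal_katona_lovasz_form (i := m - 2 * ℓ) (r := m - ℓ) (k := m - 1)
      (by omega) (by omega) (by omega) hcompls hbig'
  rw [show (m - ℓ) - (m - 2 * ℓ) = ℓ by omega] at hkk
  have hkk2 : (m - 1).choose ℓ ≤ S.card := hkk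
  have hSsized : (S : Set (Finset (Fin m))).Sized ℓ := by
    have := hcompls.shadow_iterate (k := m - 2 * ℓ)
    rwa [show (m - ℓ) - (m - 2 * ℓ) = ℓ by omega] at this
  have hsub : ℬ ∪ S ⊆ powersetCard ℓ (univ : Finset (Fin m)) := by
    intro A hA
    rw [mem_powersetCard]
    rcases mem_union.1 hA with h | h
    · exact ⟨subset_univ _, hℬs h⟩
    · exact ⟨subset_univ _, hSsized h⟩
  have hcard : ℬ.card + S.card ≤ m.choose ℓ := by
    rw [← card_union_of_disjoint hdisj]
    calc (ℬ ∪ S).card ≤ (powersetCard ℓ (univ : Finset (Fin m))).card := card_le_card hsub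
      _ = m.choose ℓ := by rw [card_powersetCard, card_univ, Fintype.card_fin]
  have hpascal : m.choose ℓ = (m - 1).choose (ℓ - 1) + (m - 1).choose ℓ := by
    obtain ⟨m', rfl⟩ : ∃ m', m = m' + 1 := ⟨m - 1, by omega⟩
    obtain ⟨ℓ', rfl⟩ : ∃ ℓ', ℓ = ℓ' + 1 := ⟨ℓ - 1, by omega⟩
    simp [Nat.choose_succ_succ]
  omega


lemma count_pair (n k : ℕ) (F : Finset (Finset ℕ))
    (hF : F ⊆ Finset.powersetCard k (Finset.Icc 1 n))
    (x y : ℕ) (hxy : x ≠ y) (hx : x ∈ Finset.Icc 1 n) (hy : y ∈ Finset.Icc 1 n) :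
    (F.filter fun S => x ∈ S ∧ y ∈ S).card ≤ (n - 2).choose (k - 2) := by
  classical
  have hIcc : (Icc 1 n).card = n := by rw [Nat.card_Icc]; omega
  have hG : (((Icc 1 n).erase x).erase y).card = n - 2 := by
    rw [card_erase_of_mem (mem_erase.2 ⟨hxy.symm, hy⟩), card_erase_of_mem hx, hIcc]
    omega
  have key : (F.filter fun S => x ∈ S ∧ y ∈ S).card
      ≤ (powersetCard (k - 2) (((Icc 1 n).erase x).erase y)).card := by
    apply card_le_card_of_injOn (fun S => (S.erase x).erase y)
    · intro S hS
      rw [mem_coe, mem_filter] at hS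
      obtain ⟨hSF, hxS, hyS⟩ := hS
      obtain ⟨hSsub, hScard⟩ := mem_powersetCard.1 (hF hSF)
      rw [mem_coe, mem_powersetCard]
      constructor
      · intro z hz
        rw [mem_erase, mem_erase] at hz
        exact mem_erase.2 ⟨hz.1, mem_erase.2 ⟨hz.2.1, hSsub hz.2.2⟩⟩
      · rw [card_erase_of_mem (mem_erase.2 ⟨hxy.symm, hyS⟩), card_erase_of_mem hxS, hScard]
        omega
    · intro S hS T hT h
      rw [mem_coe, mem_filter] at hS hT
      have hyS : y ∈ S.erase x := mem_erase.2 ⟨hxy.symm, hS.2.2⟩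
      have hyT : y ∈ T.erase x := mem_erase.2 ⟨hxy.symm, hT.2.2⟩
      calc S = insert x (S.erase x) := (insert_erase hS.2.1).symm
        _ = insert x (insert y ((S.erase x).erase y)) := by rw [insert_erase hyS]
        _ = insert x (insert y ((T.erase x).erase y)) := by simp only at h; rw [h]
        _ = insert x (T.erase x) := by rw [insert_erase hyT]
        _ = T := insert_erase hT.2.1
  rwa [card_powersetCard, hG] at key

lemma pair_bound (n k : ℕ) (hk : 3 ≤ k) (hn : 2 * k < n)
    (F : Finset (Finset ℕ)) (hF : F ⊆ Finset.powersetCard k (Finset.Icc 1 n))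
    (hint : ∀ A ∈ F, ∀ B ∈ F, (A ∩ B).Nonempty)
    (hcp : ∀ x' y', x' ≠ y' → x' ∈ Finset.Icc 1 n → y' ∈ Finset.Icc 1 n →
      (F.filter fun S => x' ∈ S ∧ y' ∈ S).card ≤ (n - 2).choose (k - 2))
    (x y : ℕ) (hx : x ∈ Finset.Icc 1 n) (hy : y ∈ Finset.Icc 1 n) (hxy : x ≠ y)
    (hdx : (n - 2).choose (k - 2) + (n - 3).choose (k - 2) < degree F x) :
    degree F y ≤ (n - 2).choose (k - 2) + (n - 3).choose (k - 2) := by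
  classical
  have hmem : ∀ S ∈ F, S ⊆ Icc 1 n ∧ S.card = k := fun S hS => mem_powersetCard.1 (hF hS)
  set G := ((Icc 1 n).erase x).erase y with hGdef
  have hGmem : ∀ z, z ∈ G ↔ z ≠ y ∧ z ≠ x ∧ z ∈ Icc 1 n := by
    intro z; rw [hGdef, mem_erase, mem_erase]
  have hGcard : G.card = n - 2 := by
    rw [hGdef, card_erase_of_mem (mem_erase.2 ⟨hxy.symm, hy⟩), card_erase_of_mem hx,
      Nat.card_Icc]
    omega
  -- enumeration of G by Fin (n - 2)
  let e := G.orderIsoOfFin hGcard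
  let h : Fin (n - 2) → ℕ := fun i => (e i : ℕ)
  have hinj : Function.Injective h := fun i j hij => e.injective (Subtype.ext hij)
  have hmemG : ∀ i, h i ∈ G := fun i => (e i).2
  have hsurj : ∀ z ∈ G, ∃ i, h i = z := fun z hz => ⟨e.symm ⟨z, hz⟩, by simp [h]⟩
  let φ : Finset ℕ → Finset (Fin (n - 2)) := fun S => univ.filter fun i => h i ∈ S
  have hφcard : ∀ S, S ⊆ G → (φ S).card = S.card := by
    intro S hSG
    apply card_bij (fun i _ => h i)
    · intro i hi; exact (mem_filter.1 hi).2
    · intro i _ j _ hij; exact hinj hij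
    · intro z hz
      obtain ⟨i, hi⟩ := hsurj z (hSG hz)
      exact ⟨i, mem_filter.2 ⟨mem_univ _, hi ▸ hz⟩, hi⟩
  have hφinj : ∀ S, S ⊆ G → ∀ T, T ⊆ G → φ S = φ T → S = T := by
    intro S hS T hT hST
    ext z
    constructor
    · intro hz
      obtain ⟨i, rfl⟩ := hsurj z (hS hz)
      have hi : i ∈ φ S := mem_filter.2 ⟨mem_univ _, hz⟩
      rw [hST] at hi; exact (mem_filter.1 hi).2
    · intro hz
      obtain ⟨i, rfl⟩ := hsurj z (hT hz)
      have hi : i ∈ φ T := mem_filter.2 ⟨mem_univ _, hz⟩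
      rw [← hST] at hi; exact (mem_filter.1 hi).2
  have hsubGx : ∀ S ∈ F, x ∈ S → y ∉ S → S.erase x ⊆ G := by
    intro S hS hxS hyS z hz
    rw [mem_erase] at hz
    exact (hGmem z).2 ⟨fun hzy => hyS (hzy ▸ hz.2), hz.1, (hmem S hS).1 hz.2⟩
  have hsubGy : ∀ S ∈ F, y ∈ S → x ∉ S → S.erase y ⊆ G := by
    intro S hS hyS hxS z hz
    rw [mem_erase] at hz
    exact (hGmem z).2 ⟨hz.1, fun hzx => hxS (hzx ▸ hz.2), (hmem S hS).1 hz.2⟩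
  set 𝒜 : Finset (Finset (Fin (n - 2))) :=
    (F.filter fun S => x ∈ S ∧ y ∉ S).image (fun S => φ (S.erase x)) with h𝒜def
  set ℬ : Finset (Finset (Fin (n - 2))) :=
    (F.filter fun S => y ∈ S ∧ x ∉ S).image (fun S => φ (S.erase y)) with hℬdef
  have h𝒜card : 𝒜.card = (F.filter fun S => x ∈ S ∧ y ∉ S).card := by
    apply card_image_of_injOn
    intro S hS T hT hphi
    rw [mem_coe, mem_filter] at hS hT
    simp only at hphi
    have heq := hφinj _ (hsubGx S hS.1 hS.2.1 hS.2.2) _ (hsubGx T hT.1 hT.2.1 hT.2.2) hphi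
    calc S = insert x (S.erase x) := (insert_erase hS.2.1).symm
      _ = insert x (T.erase x) := by rw [heq]
      _ = T := insert_erase hT.2.1
  have hℬcard : ℬ.card = (F.filter fun S => y ∈ S ∧ x ∉ S).card := by
    apply card_image_of_injOn
    intro S hS T hT hphi
    rw [mem_coe, mem_filter] at hS hT
    simp only at hphi
    have heq := hφinj _ (hsubGy S hS.1 hS.2.1 hS.2.2) _ (hsubGy T hT.1 hT.2.1 hT.2.2) hphi
    calc S = insert y (S.erase y) := (insert_erase hS.2.1).symm
      _ = insert y (T.erase y) := by rw [heq]
      _ = T := insert_erase hT.2.1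
  have h𝒜sized : (𝒜 : Set (Finset (Fin (n - 2)))).Sized (k - 1) := by
    intro A hA
    rw [mem_coe, h𝒜def, mem_image] at hA
    obtain ⟨S, hS, rfl⟩ := hA
    rw [mem_filter] at hS
    rw [hφcard _ (hsubGx S hS.1 hS.2.1 hS.2.2), card_erase_of_mem hS.2.1, (hmem S hS.1).2]
  have hℬsized : (ℬ : Set (Finset (Fin (n - 2)))).Sized (k - 1) := by
    intro A hA
    rw [mem_coe, hℬdef, mem_image] at hA
    obtain ⟨S, hS, rfl⟩ := hA
    rw [mem_filter] at hS
    rw [hφcard _ (hsubGy S hS.1 hS.2.1 hS.2.2), card_erase_of_mem hS.2.1, (hmem S hS.1).2]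
  have hcross : ∀ A ∈ 𝒜, ∀ B ∈ ℬ, ¬ Disjoint A B := by
    intro A hA B hB
    rw [h𝒜def, mem_image] at hA
    rw [hℬdef, mem_image] at hB
    obtain ⟨S, hS, rfl⟩ := hA
    obtain ⟨T, hT, rfl⟩ := hB
    rw [mem_filter] at hS hT
    obtain ⟨z, hz⟩ := hint S hS.1 T hT.1
    rw [mem_inter] at hz
    have hzG : z ∈ G := (hGmem z).2
      ⟨fun hh => hS.2.2 (hh ▸ hz.1), fun hh => hT.2.2 (hh ▸ hz.2), (hmem S hS.1).1 hz.1⟩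
    obtain ⟨i, rfl⟩ := hsurj z hzG
    rw [not_disjoint_iff]
    refine ⟨i, ?_, ?_⟩
    · exact mem_filter.2 ⟨mem_univ _, mem_erase.2
        ⟨fun hh => hT.2.2 (hh ▸ hz.2), hz.1⟩⟩
    · exact mem_filter.2 ⟨mem_univ _, mem_erase.2
        ⟨fun hh => hS.2.2 (hh ▸ hz.1), hz.2⟩⟩
  -- degree splits
  have hsplitx : (F.filter fun S => x ∈ S ∧ y ∈ S).card
      + (F.filter fun S => x ∈ S ∧ y ∉ S).card = degree F x := by
    rw [degree, ← filter_filter, ← filter_filter]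
    exact card_filter_add_card_filter_not (fun S => y ∈ S)
  have hsplity : (F.filter fun S => y ∈ S ∧ x ∈ S).card
      + (F.filter fun S => y ∈ S ∧ x ∉ S).card = degree F y := by
    rw [degree, ← filter_filter, ← filter_filter]
    exact card_filter_add_card_filter_not (fun S => x ∈ S)
  have hxyc := hcp x y hxy hx hy
  have hyxc : (F.filter fun S => y ∈ S ∧ x ∈ S).card ≤ (n - 2).choose (k - 2) := by
    have heq : (F.filter fun S => y ∈ S ∧ x ∈ S) = (F.filter fun S => x ∈ S ∧ y ∈ S) := by
      apply filter_congr; intro S _; constructor <;> exact fun hh => ⟨hh.2, hh.1⟩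
    rw [heq]; exact hxyc
  have echoose : (n - 2 - 1).choose (k - 1 - 1) = (n - 3).choose (k - 2) := by
    congr 1 <;> omega
  have hAbig : (n - 2 - 1).choose (k - 1 - 1) < 𝒜.card := by
    rw [h𝒜card, echoose]; omega
  have hBle := cross_bound (by omega) (by omega) 𝒜 ℬ h𝒜sized hℬsized hcross hAbig
  rw [echoose, hℬcard] at hBle
  omega

lemma le_map_exists {α β : Type*} [DecidableEq α] [DecidableEq β] {f : α → β} :
    ∀ {t : Multiset β} {s : Multiset α}, t ≤ s.map f → ∃ u, u ≤ s ∧ u.map f = t := by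
  intro t
  induction t using Multiset.induction with
  | empty => exact fun {s} _ => ⟨0, Multiset.zero_le _, rfl⟩
  | cons a t ih =>
    intro s hle
    have ha : a ∈ s.map f := Multiset.mem_of_le hle (Multiset.mem_cons_self a t)
    obtain ⟨x, hx, rfl⟩ := Multiset.mem_map.1 ha
    have ht : t ≤ (s.map f).erase (f x) := by
      have h2 := Multiset.erase_le_erase (f x) hle
      rwa [Multiset.erase_cons_head] at h2
    have hmaperase : (s.map f).erase (f x) = (s.erase x).map f := by
      conv_lhs => rw [(Multiset.cons_erase hx).symm]
      rw [Multiset.map_cons, Multiset.erase_cons_head]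
    rw [hmaperase] at ht
    obtain ⟨u, hu, hmap⟩ := ih ht
    refine ⟨x ::ₘ u, ?_, by rw [Multiset.map_cons, hmap]⟩
    calc x ::ₘ u ≤ x ::ₘ s.erase x := Multiset.cons_le_cons x hu
      _ = s := Multiset.cons_erase hx


lemma exists_pair (n : ℕ) (hn : 2 ≤ n) (F : Finset (Finset ℕ)) :
    ∃ x ∈ Finset.Icc 1 n, ∃ y ∈ Finset.Icc 1 n, x ≠ y ∧
      nthDegree n F 2 ≤ degree F x ∧ nthDegree n F 2 ≤ degree F y := by
  classical
  have hlen : (((Finset.Icc 1 n).val.map (degree F)).sort (· ≥ ·)).length = n := by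
    rw [Multiset.length_sort, Multiset.card_map]
    show (Finset.Icc 1 n).card = n
    rw [Nat.card_Icc]
    omega
  have hsorted := Multiset.pairwise_sort (α := ℕ) (r := (· ≥ ·)) (s := (Finset.Icc 1 n).val.map (degree F))
  have hperm := Multiset.sort_eq (α := ℕ) (r := (· ≥ ·)) (s := (Finset.Icc 1 n).val.map (degree F))
  rcases hl : ((Finset.Icc 1 n).val.map (degree F)).sort (· ≥ ·) with _ | ⟨a, l'⟩
  · rw [hl] at hlen; simp at hlen; omega
  rcases l' with _ | ⟨b, t⟩
  · rw [hl] at hlen; simp at hlen; omega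
  rw [hl] at hsorted hperm
  have hv : nthDegree n F 2 = b := by
    rw [nthDegree, hl]
    rfl
  have hab : b ≤ a := (List.pairwise_cons.1 hsorted).1 b (by simp)
  have h2le : ({a, b} : Multiset ℕ) ≤ (Finset.Icc 1 n).val.map (degree F) := by
    rw [← hperm]
    show (a ::ₘ b ::ₘ 0) ≤ (a ::ₘ b ::ₘ ↑t)
    exact Multiset.cons_le_cons a (Multiset.cons_le_cons b (Multiset.zero_le _))
  obtain ⟨u, hu, hmap⟩ := le_map_exists h2le
  have hnodup : u.Nodup := Multiset.nodup_of_le hu (Finset.Icc 1 n).nodup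
  have hcard : Multiset.card u = 2 := by
    have h3 := congrArg Multiset.card hmap
    simpa using h3
  obtain ⟨p, q, rfl⟩ := Multiset.card_eq_two.1 hcard
  have hpq : p ≠ q := by simpa using hnodup
  have hpmem : p ∈ Finset.Icc 1 n := Finset.mem_def.2 (Multiset.mem_of_le hu (by simp))
  have hqmem : q ∈ Finset.Icc 1 n := Finset.mem_def.2 (Multiset.mem_of_le hu (by simp))
  have hdp : degree F p = a ∨ degree F p = b := by
    have h4 : degree F p ∈ ({a, b} : Multiset ℕ) := by
      rw [← hmap]; simp
    simpa using h4
  have hdq : degree F q = a ∨ degree F q = b := by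
    have h4 : degree F q ∈ ({a, b} : Multiset ℕ) := by
      rw [← hmap]; simp
    simpa using h4
  exact ⟨p, hpmem, q, hqmem, hpq, by rw [hv]; omega, by rw [hv]; omega⟩

theorem stmt_0 (n k : ℕ) (hk : 3 ≤ k) (hn : 2 * k < n)
    (F : Finset (Finset ℕ)) (hF : F ⊆ Finset.powersetCard k (Finset.Icc 1 n))
    (hint : ∀ A ∈ F, ∀ B ∈ F, (A ∩ B).Nonempty) :
    nthDegree n F 2 ≤ (n - 2).choose (k - 2) + (n - 3).choose (k - 2) := by
  obtain ⟨x, hx, y, hy, hxy, hvx, hvy⟩ := exists_pair n (by omega) F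
  by_cases hc : (n - 2).choose (k - 2) + (n - 3).choose (k - 2) < degree F x
  · exact le_trans hvy (pair_bound n k hk hn F hF hint
      (fun x' y' h1 h2 h3 => count_pair n k F hF x' y' h1 h2 h3) x y hx hy hxy hc)
  · omega
end

section
/- Let n > 2k ≥ 2 be integers and let F ⊆ \binom{[n]}{k} be an intersecting family with d_1(F) < |F| (i.e., the maximum degree is strictly less than the number of members, equivalently F has no common element). Then d_1(F) ≤ \binom{n-1}{k-1} − \binom{n-k-1}{k-1}. -/
open Finset

theorem stmt_7 (n k : ℕ) (hk : 1 ≤ k) (hn : 2 * k < n)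
    (F : Finset (Finset ℕ)) (hF : F ⊆ Finset.powersetCard k (Finset.Icc 1 n))
    (hint : ∀ A ∈ F, ∀ B ∈ F, (A ∩ B).Nonempty)
    (hd : nthDegree n F 1 < F.card) :
    nthDegree n F 1 ≤ (n - 1).choose (k - 1) - (n - k - 1).choose (k - 1) := by
  set s := Finset.Icc 1 n with hs
  have hscard : s.card = n := by simp [hs]
  -- the top degree is the degree of some x ∈ s
  obtain ⟨x, hxs, hxd⟩ : ∃ x ∈ s, degree F x = nthDegree n F 1 := by
    have hlen : ((s.val.map (degree F)).sort (· ≥ ·)).length = n := by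
      rw [Multiset.length_sort, Multiset.card_map, ← hscard]; rfl
    unfold nthDegree
    rcases hl : ((s.val.map (degree F)).sort (· ≥ ·)) with _ | ⟨a, t⟩
    · rw [hl] at hlen; simp at hlen; omega
    · have ha : a ∈ (s.val.map (degree F)).sort (· ≥ ·) := by rw [hl]; simp
      rw [Multiset.mem_sort] at ha
      obtain ⟨x, hx, hxa⟩ := Multiset.mem_map.mp ha
      exact ⟨x, hx, by simp [hxa]⟩
  rw [← hxd] at hd ⊢
  -- find B ∈ F with x ∉ B
  obtain ⟨B, hBF, hxB⟩ : ∃ B ∈ F, x ∉ B := by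
    by_contra h
    push_neg at h
    have : F.filter (fun A => x ∈ A) = F := Finset.filter_eq_self.mpr h
    rw [degree, this] at hd; omega
  have hBmem := hF hBF
  rw [Finset.mem_powersetCard] at hBmem
  obtain ⟨hBs, hBcard⟩ := hBmem
  set s' := s.erase x with hs'
  have hs'card : s'.card = n - 1 := by rw [hs', Finset.card_erase_of_mem hxs, hscard]
  have hBs' : B ⊆ s' := fun y hy => Finset.mem_erase.mpr ⟨fun h => hxB (h ▸ hy), hBs hy⟩
  set P := Finset.powersetCard (k - 1) s' with hP
  set D := P.filter (fun C => Disjoint C B) with hD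
  have hDP : D ⊆ P := Finset.filter_subset _ _
  have hPcard : P.card = (n - 1).choose (k - 1) := by
    rw [hP, Finset.card_powersetCard, hs'card]
  have hDcard : D.card = (n - k - 1).choose (k - 1) := by
    have : D = Finset.powersetCard (k - 1) (s' \ B) := by
      ext C
      simp only [hD, hP, Finset.mem_filter, Finset.mem_powersetCard, Finset.subset_sdiff]
      tauto
    rw [this, Finset.card_powersetCard, Finset.card_sdiff_of_subset hBs', hs'card, hBcard]
    congr 1
    omega
  -- injective map A ↦ A.erase x from members containing x into P \ D
  have hinj : degree F x ≤ (P \ D).card := by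
    apply Finset.card_le_card_of_injOn (fun A => A.erase x)
    · intro A hA
      rw [Finset.mem_coe, Finset.mem_filter] at hA
      obtain ⟨hAF, hxA⟩ := hA
      have hAmem := hF hAF
      rw [Finset.mem_powersetCard] at hAmem
      obtain ⟨hAs, hAcard⟩ := hAmem
      rw [Finset.mem_coe, Finset.mem_sdiff]
      constructor
      · rw [hP, Finset.mem_powersetCard]
        exact ⟨Finset.erase_subset_erase x hAs,
          by rw [Finset.card_erase_of_mem hxA, hAcard]⟩
      · rw [hD, Finset.mem_filter]
        rintro ⟨-, hdis⟩
        obtain ⟨y, hy⟩ := hint A hAF B hBF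
        rw [Finset.mem_inter] at hy
        have hyx : y ≠ x := fun h => hxB (h ▸ hy.2)
        exact (Finset.disjoint_left.mp hdis (Finset.mem_erase.mpr ⟨hyx, hy.1⟩)) hy.2
    · intro A hA A' hA' h
      rw [Finset.coe_filter, Set.mem_setOf_eq] at hA hA'
      have := congrArg (insert x) h
      rwa [Finset.insert_erase hA.2, Finset.insert_erase hA'.2] at this
  calc degree F x ≤ (P \ D).card := hinj
    _ = P.card - D.card := Finset.card_sdiff_of_subset hDP
    _ = (n - 1).choose (k - 1) - (n - k - 1).choose (k - 1) := by rw [hPcard, hDcard]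
end

section
/- Let a, b, n be positive integers with n ≥ a + b, and let A ⊆ \binom{[n]}{a} and B ⊆ \binom{[n]}{b} be cross-intersecting families. If |A| ≥ \binom{n-2}{a-2} + \binom{n-3}{a-2} + … + \binom{n-d}{a-2} for some integer d with 2 ≤ d ≤ b + 1, then |B| ≤ \binom{n-1}{b-1} + \binom{n-d}{b-d+1}. -/
set_option maxHeartbeats 1000000
attribute [-instance] instDecidableEqFin

open Finset Finset.Colex

private lemma pascal_sum (N c : ℕ) : ∀ d, 2 ≤ d → d ≤ N →
    ∑ j ∈ Icc 2 d, (N - j).choose c + (N - d).choose (c+1) = (N-1).choose (c+1) := by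
  intro d
  induction d with
  | zero => omega
  | succ d ih =>
    intro h2 hN
    rcases Nat.lt_or_ge d 2 with hd | hd
    · interval_cases d
      · omega
      · simp only [Icc_self, sum_singleton]
        have : N - 1 = (N - 2) + 1 := by omega
        rw [this, Nat.choose_succ_succ']
    · rw [Finset.sum_Icc_succ_top (by omega : 2 ≤ d + 1)]
      have hrec : N - d = (N - (d+1)) + 1 := by omega
      have := ih hd (by omega)
      rw [← this, hrec, Nat.choose_succ_succ']
      ring

private lemma main_fin (n a b d : ℕ) (ha : 2 ≤ a) (hb : 1 ≤ b) (hn : a + b ≤ n)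
    (hd2 : 2 ≤ d) (hdb : d ≤ b + 1)
    (𝒜 ℬc : Finset (Finset (Fin n)))
    (h𝒜 : ∀ s ∈ 𝒜, s.card = a)
    (hℬ : ∀ C ∈ ℬc, C.card = n - b)
    (hdisj : ∀ s ∈ 𝒜, ∀ C ∈ ℬc, ¬ s ⊆ C)
    (hAcard : ∑ j ∈ Finset.Icc 2 d, (n - j).choose (a - 2) ≤ 𝒜.card) :
    ℬc.card ≤ (n - 1).choose (b - 1) + (n - d).choose (b + 1 - d) := by
  by_contra hcon
  push_neg at hcon
  set m := n - b with hm
  have hman : 2 ≤ m ∧ a ≤ m ∧ m ≤ n - 1 ∧ d ≤ n - 1 ∧ m - 1 ≤ n - d ∧ 3 ≤ n := by omega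
  obtain ⟨hm2, ham, hmn1, hdn1, hm1nd, hn3⟩ := hman
  -- basic objects
  set bot : ℕ → Finset (Fin n) := fun k => univ.filter (fun i : Fin n => (i:ℕ) < k) with hbot
  have mem_bot : ∀ (k : ℕ) (i : Fin n), i ∈ bot k ↔ (i:ℕ) < k := by
    intro k i; simp [hbot]
  have card_bot : ∀ k, k ≤ n → (bot k).card = k := by
    intro k hk
    have : bot k = Finset.attachFin (range k) (fun m hm => by rw [mem_range] at hm; omega) := by
      ext i; simp [hbot]
    rw [this, card_attachFin, card_range]
  have bot_mono : ∀ k l, k ≤ l → bot k ⊆ bot l := by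
    intro k l hkl i hi; rw [mem_bot] at *; omega
  set e1 : Fin n := ⟨n-1, by omega⟩ with he1
  set ed : Fin n := ⟨n-d, by omega⟩ with hed
  have he1d : e1 ≠ ed := by simp [he1, hed, Fin.ext_iff]; omega
  set E : Finset (Fin n) := insert e1 (insert ed (bot (m-2))) with hE
  have mem_E : ∀ i : Fin n, i ∈ E ↔ i = e1 ∨ i = ed ∨ (i:ℕ) < m - 2 := by
    intro i; simp [hE, mem_bot]
  have cardE : E.card = m := by
    rw [hE, card_insert_of_notMem, card_insert_of_notMem, card_bot (m-2) (by omega)]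
    · omega
    · rw [mem_bot]; simp [hed]; omega
    · simp only [mem_insert, mem_bot]
      push_neg
      exact ⟨he1d, by simp [he1]; omega⟩
  -- the three chunks of the initial segment
  set P1 : Finset (Finset (Fin n)) := powersetCard m (bot (n-1)) with hP1
  set P2 : Finset (Finset (Fin n)) := (powersetCard (m-1) (bot (n-d))).image (insert e1) with hP2
  -- colex facts
  have hcolex1 : ∀ T, T ⊆ bot (n-1) → toColex T ≤ toColex E := by
    intro T hT
    rw [toColex_le_toColex]
    intro x hx hxE
    refine ⟨e1, by rw [mem_E]; tauto, fun h => ?_, ?_⟩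
    · have := hT h; rw [mem_bot] at this; simp [he1] at this
    · have : (x:ℕ) < n := x.2
      exact Fin.mk_le_of_le_val (by simpa [he1] using (by omega : (x:ℕ) ≤ n - 1))
  have hcolex2 : ∀ S, S ⊆ bot (n-d) → toColex (insert e1 S) ≤ toColex E := by
    intro S hS
    rw [toColex_le_toColex]
    intro x hx hxE
    rcases mem_insert.1 hx with rfl | hxS
    · exact absurd (by rw [mem_E]; tauto) hxE
    · have hxlt := (mem_bot _ _).1 (hS hxS)
      refine ⟨ed, by rw [mem_E]; tauto, ?_, ?_⟩
      · simp only [mem_insert]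
        push_neg
        refine ⟨he1d.symm, fun h => ?_⟩
        have := (mem_bot _ _).1 (hS h); simp [hed] at this
      · exact Fin.mk_le_of_le_val (by simpa [hed] using (by omega : (x:ℕ) ≤ n - d))
  -- the initial segment is contained in the union
  have hseg_sub : initSeg E ⊆ P1 ∪ P2 ∪ {E} := by
    intro T hT
    rw [mem_initSeg, cardE] at hT
    obtain ⟨hTcard, hTle⟩ := hT
    rw [Colex.le_def] at hTle
    simp only [ofColex_toColex] at hTle
    by_cases h1 : e1 ∈ T
    · by_cases hd' : ed ∈ T
      · -- T = E
        have hTE : T ⊆ E := by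
          intro x hx
          by_contra hxE
          obtain ⟨y, hyE, hyT, hxy⟩ := hTle hx hxE
          rw [mem_E] at hyE
          rcases hyE with rfl | rfl | hy
          · exact hyT h1
          · exact hyT hd'
          · rw [mem_E] at hxE
            push_neg at hxE
            have : (x:ℕ) ≤ (y:ℕ) := hxy
            omega
        have : T = E := eq_of_subset_of_card_le hTE (by omega)
        simp [this]
      · -- T ∈ P2
        have hS : T.erase e1 ⊆ bot (n-d) := by
          intro x hx
          obtain ⟨hxe1, hxT⟩ := mem_erase.1 hx
          rw [mem_bot]
          by_contra hge
          push_neg at hge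
          have hxed : x ≠ ed := fun h => hd' (h ▸ hxT)
          have hxE : x ∉ E := by
            rw [mem_E]; push_neg
            refine ⟨hxe1, hxed, by omega⟩
          obtain ⟨y, hyE, hyT, hxy⟩ := hTle hxT hxE
          rw [mem_E] at hyE
          have hxyv : (x:ℕ) ≤ (y:ℕ) := hxy
          rcases hyE with rfl | rfl | hy
          · exact hyT h1
          · have : x = ed := Fin.ext (by simp [hed] at hxyv ⊢; omega)
            exact hxed this
          · omega
        refine mem_union_left _ (mem_union_right _ ?_)
        rw [hP2, mem_image]
        refine ⟨T.erase e1, mem_powersetCard.2 ⟨hS, ?_⟩, by rw [insert_erase h1]⟩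
        rw [card_erase_of_mem h1]; omega
    · -- T ∈ P1
      refine mem_union_left _ (mem_union_left _ ?_)
      rw [hP1, mem_powersetCard]
      refine ⟨fun x hx => ?_, hTcard.symm⟩
      rw [mem_bot]
      have : (x:ℕ) < n := x.2
      have hne : x ≠ e1 := fun h => h1 (h ▸ hx)
      have : (x:ℕ) ≠ n - 1 := by simpa [Fin.ext_iff, he1] using hne
      omega
  -- cardinality of the initial segment
  have hseg_card : (initSeg E).card ≤ (n - 1).choose (b - 1) + (n - d).choose (b + 1 - d) + 1 := by
    calc (initSeg E).card ≤ (P1 ∪ P2 ∪ {E}).card := card_le_card hseg_sub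
    _ ≤ (P1 ∪ P2).card + 1 := by simpa using card_union_le (P1 ∪ P2) {E}
    _ ≤ P1.card + P2.card + 1 := by have := card_union_le P1 P2; omega
    _ ≤ (n - 1).choose (b - 1) + (n - d).choose (b + 1 - d) + 1 := by
        have h1 : P1.card = (n-1).choose (b-1) := by
          rw [hP1, card_powersetCard, card_bot _ (by omega)]
          rw [show b - 1 = (n-1) - m by omega]
          exact (Nat.choose_symm (show m ≤ n-1 by omega)).symm
        have h2 : P2.card ≤ (n-d).choose (b+1-d) := by
          refine (card_image_le).trans ?_
          rw [card_powersetCard, card_bot _ (by omega)]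
          rw [show b + 1 - d = (n-d) - (m-1) by omega]
          exact (Nat.choose_symm (show m-1 ≤ n-d by omega)).symm.le
        omega
  -- shadow chunks
  set S0 : Finset (Fin n) := insert e1 (insert ed (bot (a-2))) with hS0
  set Q1 : Finset (Finset (Fin n)) := powersetCard a (bot (n-1)) with hQ1
  set Q2 : Finset (Finset (Fin n)) := (powersetCard (a-1) (bot (n-d))).image (insert e1) with hQ2
  have hQ1sub : ∀ T ∈ Q1, T ∈ shadow^[m-a] (initSeg E) := by
    intro T hT
    rw [hQ1, mem_powersetCard] at hT
    obtain ⟨hTsub, hTcard⟩ := hT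
    obtain ⟨u, hTu, hub, hucard⟩ := exists_subsuperset_card_eq hTsub
      (by omega : #T ≤ m) (by rw [card_bot _ (by omega)]; omega)
    rw [mem_shadow_iterate_iff_exists_sdiff]
    refine ⟨u, ?_, hTu, ?_⟩
    · rw [mem_initSeg]; exact ⟨by rw [cardE, hucard], hcolex1 u hub⟩
    · rw [card_sdiff_of_subset hTu, hucard, hTcard]
  have he1bot : ∀ k, k ≤ n - 1 → e1 ∉ bot k := by
    intro k hk h
    rw [mem_bot] at h; simp only [he1] at h; omega
  have hQ2sub : ∀ S ∈ powersetCard (a-1) (bot (n-d)), insert e1 S ∈ shadow^[m-a] (initSeg E) := by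
    intro S hS
    rw [mem_powersetCard] at hS
    obtain ⟨hSsub, hScard⟩ := hS
    obtain ⟨u, hSu, hub, hucard⟩ := exists_subsuperset_card_eq hSsub
      (by omega : #S ≤ m - 1) (by rw [card_bot _ (by omega)]; omega)
    have he1u : e1 ∉ u := fun h => he1bot (n-d) (by omega) (hub h)
    have he1S : e1 ∉ S := fun h => he1u (hSu h)
    rw [mem_shadow_iterate_iff_exists_sdiff]
    refine ⟨insert e1 u, ?_, insert_subset_insert _ hSu, ?_⟩
    · rw [mem_initSeg]
      refine ⟨?_, hcolex2 u hub⟩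
      rw [cardE, card_insert_of_notMem he1u]; omega
    · have hdd : insert e1 u \ insert e1 S = u \ S := by
        ext x
        simp only [mem_sdiff, mem_insert, not_or]
        constructor
        · rintro ⟨h1 | h1, h2, h3⟩
          · exact absurd h1 h2
          · exact ⟨h1, h3⟩
        · rintro ⟨hu, hnS⟩
          exact ⟨Or.inr hu, fun h => he1u (h ▸ hu), hnS⟩
      rw [hdd, card_sdiff_of_subset hSu, hucard, hScard]
      omega
  have hS0mem : S0 ∈ shadow^[m-a] (initSeg E) := by
    rw [mem_shadow_iterate_iff_exists_sdiff]
    refine ⟨E, mem_initSeg_self, ?_, ?_⟩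
    · rw [hS0, hE]
      exact insert_subset_insert _ (insert_subset_insert _ (bot_mono _ _ (by omega)))
    · have hdd : E \ S0 = bot (m-2) \ bot (a-2) := by
        ext x
        simp only [hE, hS0, mem_sdiff, mem_insert, mem_bot, not_or, Fin.ext_iff, he1, hed]
        omega
      rw [hdd, card_sdiff_of_subset (bot_mono _ _ (by omega)), card_bot _ (by omega), card_bot _ (by omega)]
      omega
  have hQ1card : Q1.card = (n-1).choose a := by
    rw [hQ1, card_powersetCard, card_bot _ (by omega)]
  have hQ2card : Q2.card = (n-d).choose (a-1) := by
    rw [hQ2, card_image_of_injOn, card_powersetCard, card_bot _ (by omega)]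
    intro S hS T hT h
    rw [mem_coe, mem_powersetCard] at hS hT
    have he1S : e1 ∉ S := fun hh => he1bot (n-d) (by omega) (hS.1 hh)
    have he1T : e1 ∉ T := fun hh => he1bot (n-d) (by omega) (hT.1 hh)
    rw [← erase_insert he1S, h, erase_insert he1T]
  have hdisj12 : Disjoint Q1 Q2 := by
    rw [disjoint_left]
    intro T hT1 hT2
    rw [hQ1, mem_powersetCard] at hT1
    rw [hQ2, mem_image] at hT2
    obtain ⟨S, hS, rfl⟩ := hT2
    exact he1bot (n-1) le_rfl (hT1.1 (mem_insert_self _ _))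
  have hS0not1 : S0 ∉ Q1 := by
    intro h
    rw [hQ1, mem_powersetCard] at h
    exact he1bot (n-1) le_rfl (h.1 (by rw [hS0]; exact mem_insert_self _ _))
  have hS0not2 : S0 ∉ Q2 := by
    intro h
    rw [hQ2, mem_image] at h
    obtain ⟨S, hS, hEq⟩ := h
    have h' : ed ∈ insert e1 S := by
      rw [hEq, hS0]; exact mem_insert_of_mem (mem_insert_self _ _)
    rcases mem_insert.1 h' with h'' | h''
    · exact he1d h''.symm
    · have := (mem_powersetCard.1 hS).1 h''
      rw [mem_bot] at this
      simp only [hed] at this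
      omega
  have hshadow : (n-1).choose a + (n-d).choose (a-1) + 1 ≤ (shadow^[m-a] (initSeg E)).card := by
    have hsub : Q1 ∪ Q2 ∪ {S0} ⊆ shadow^[m-a] (initSeg E) := by
      intro T hT
      rcases mem_union.1 hT with hT | hT
      · rcases mem_union.1 hT with hT | hT
        · exact hQ1sub T hT
        · rw [hQ2, mem_image] at hT
          obtain ⟨S, hS, rfl⟩ := hT
          exact hQ2sub S hS
      · rw [mem_singleton] at hT
        subst hT
        exact hS0mem
    have hcards : (Q1 ∪ Q2 ∪ {S0}).card = Q1.card + Q2.card + 1 := by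
      rw [card_union_of_disjoint, card_union_of_disjoint hdisj12, card_singleton]
      rw [disjoint_singleton_right, mem_union]
      push_neg
      exact ⟨hS0not1, hS0not2⟩
    calc (n-1).choose a + (n-d).choose (a-1) + 1 = (Q1 ∪ Q2 ∪ {S0}).card := by
          rw [hcards, hQ1card, hQ2card]
      _ ≤ (shadow^[m-a] (initSeg E)).card := card_le_card hsub
  -- Kruskal-Katona
  have hKK : (shadow^[m-a] (initSeg E)).card ≤ (shadow^[m-a] ℬc).card := by
    have hsz : Set.Sized m (ℬc : Set (Finset (Fin n))) := fun C hC => hℬ C (mem_coe.1 hC)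
    have hle : #(initSeg E) ≤ #ℬc :=
      le_trans hseg_card (by omega)
    have hinit : IsInitSeg (initSeg E) m := by
      have h := isInitSeg_initSeg (s := E)
      rwa [cardE] at h
    exact iterated_kk hsz hle hinit
  set D := shadow^[m-a] ℬc with hD
  have hDsized : ∀ t ∈ D, t.card = a := by
    intro t ht
    rw [hD, mem_shadow_iterate_iff_exists_sdiff] at ht
    obtain ⟨C, hC, htC, hcd⟩ := ht
    have h1 := hℬ C hC
    have h2 := card_sdiff_add_card_eq_card htC
    omega
  have hDdisj : Disjoint 𝒜 D := by
    rw [disjoint_left]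
    intro t ht htD
    rw [hD, mem_shadow_iterate_iff_exists_sdiff] at htD
    obtain ⟨C, hC, htC, -⟩ := htD
    exact hdisj t ht C hC htC
  have hcount : 𝒜.card + D.card ≤ n.choose a := by
    have hsub : 𝒜 ∪ D ⊆ powersetCard a univ := by
      intro t ht
      rw [mem_powersetCard]
      rcases mem_union.1 ht with h | h
      · exact ⟨subset_univ _, h𝒜 t h⟩
      · exact ⟨subset_univ _, hDsized t h⟩
    calc 𝒜.card + D.card = (𝒜 ∪ D).card := (card_union_of_disjoint hDdisj).symm
      _ ≤ (powersetCard a univ).card := card_le_card hsub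
      _ = n.choose a := by rw [card_powersetCard, card_univ, Fintype.card_fin]
  -- arithmetic conclusion
  have hps := pascal_sum n (a-2) d hd2 (by omega)
  rw [show a - 2 + 1 = a - 1 by omega] at hps
  have hp2 : n.choose a = (n-1).choose (a-1) + (n-1).choose a := by
    have h := Nat.choose_succ_succ' (n-1) (a-1)
    rw [show n-1+1 = n by omega, show a-1+1 = a by omega] at h
    exact h
  omega

private def Gmap (n : ℕ) (s : Finset ℕ) : Finset (Fin n) :=
  univ.filter (fun i : Fin n => (i:ℕ)+1 ∈ s)

private lemma mem_Gmap {n : ℕ} {s : Finset ℕ} {i : Fin n} :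
    i ∈ Gmap n s ↔ (i:ℕ)+1 ∈ s := by simp [Gmap]

private lemma card_Gmap {n : ℕ} {s : Finset ℕ} (hs : s ⊆ Finset.Icc 1 n) :
    (Gmap n s).card = s.card := by
  apply card_bij (fun (i : Fin n) _ => (i:ℕ)+1)
  · intro i hi
    exact mem_Gmap.1 hi
  · intro i _ j _ h
    exact Fin.ext (by omega)
  · intro x hx
    have hx' := mem_Icc.1 (hs hx)
    refine ⟨⟨x-1, by omega⟩, mem_Gmap.2 ?_, ?_⟩
    · show (x - 1) + 1 ∈ s
      rw [show x - 1 + 1 = x from by omega]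
      exact hx
    · show (x - 1) + 1 = x
      omega

private lemma Gmap_mem_of_mem {n : ℕ} {s : Finset ℕ} {x : ℕ} (h1 : 1 ≤ x) (h2 : x ≤ n)
    (hx : x ∈ s) : (⟨x-1, by omega⟩ : Fin n) ∈ Gmap n s := by
  apply mem_Gmap.2
  show (x - 1) + 1 ∈ s
  rw [show x - 1 + 1 = x from by omega]
  exact hx

private lemma Gmap_inj {n : ℕ} {s t : Finset ℕ} (hs : s ⊆ Finset.Icc 1 n)
    (ht : t ⊆ Finset.Icc 1 n) (h : Gmap n s = Gmap n t) : s = t := by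
  have key : ∀ (u v : Finset ℕ), u ⊆ Finset.Icc 1 n → Gmap n u = Gmap n v →
      ∀ x ∈ u, x ∈ v := by
    intro u v hu huv x hx
    have hx' := mem_Icc.1 (hu hx)
    have h1 : (⟨x-1, by omega⟩ : Fin n) ∈ Gmap n u := Gmap_mem_of_mem hx'.1 hx'.2 hx
    rw [huv] at h1
    have h2 : (x - 1) + 1 ∈ v := mem_Gmap.1 h1
    rwa [show x - 1 + 1 = x from by omega] at h2
  ext x
  exact ⟨fun hx => key s t hs h x hx, fun hx => key t s ht h.symm x hx⟩

theorem stmt_9 (n a b d : ℕ) (ha : 1 ≤ a) (hb : 1 ≤ b) (hn : a + b ≤ n)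
    (hd2 : 2 ≤ d) (hdb : d ≤ b + 1)
    (A B : Finset (Finset ℕ))
    (hA : A ⊆ Finset.powersetCard a (Finset.Icc 1 n))
    (hB : B ⊆ Finset.powersetCard b (Finset.Icc 1 n))
    (hcross : ∀ s ∈ A, ∀ t ∈ B, (s ∩ t).Nonempty)
    (hAcard : ∑ j ∈ Finset.Icc 2 d, (n - j).choose (a - 2) ≤ A.card) :
    B.card ≤ (n - 1).choose (b - 1) + (n - d).choose (b + 1 - d) := by
  rcases eq_or_lt_of_le ha with h1 | ha2
  · -- a = 1
    have hA1 : A.Nonempty := by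
      rw [← card_pos]
      have h2d : (2:ℕ) ∈ Finset.Icc 2 d := mem_Icc.2 ⟨le_rfl, hd2⟩
      have hone : 1 ≤ ∑ j ∈ Finset.Icc 2 d, (n - j).choose (a - 2) := by
        calc 1 = (n-2).choose (a-2) := by rw [show a - 2 = 0 from by omega]; simp
          _ ≤ _ := single_le_sum (f := fun j => (n - j).choose (a-2))
            (fun i _ => Nat.zero_le _) h2d
      omega
    obtain ⟨s, hs⟩ := hA1
    obtain ⟨hsub, hcard⟩ := mem_powersetCard.1 (hA hs)
    rw [← h1] at hcard
    obtain ⟨x, rfl⟩ := card_eq_one.1 hcard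
    have hxB : ∀ t ∈ B, x ∈ t := by
      intro t ht
      obtain ⟨y, hy⟩ := hcross _ hs t ht
      rw [mem_inter, mem_singleton] at hy
      obtain ⟨rfl, h⟩ := hy
      exact h
    have hinj : Set.InjOn (fun t : Finset ℕ => t.erase x) ↑B := by
      intro s1 h1' s2 h2' h
      replace h : s1.erase x = s2.erase x := h
      rw [← insert_erase (hxB s1 (mem_coe.1 h1')), h, insert_erase (hxB s2 (mem_coe.1 h2'))]
    have hmaps : ∀ t ∈ B, t.erase x ∈ powersetCard (b-1) ((Finset.Icc 1 n).erase x) := by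
      intro t ht
      obtain ⟨hsub', hcard'⟩ := mem_powersetCard.1 (hB ht)
      rw [mem_powersetCard]
      exact ⟨erase_subset_erase _ hsub', by rw [card_erase_of_mem (hxB t ht), hcard']⟩
    have hxI : x ∈ Finset.Icc 1 n := hsub (mem_singleton_self x)
    calc B.card = (B.image (fun t : Finset ℕ => t.erase x)).card := (card_image_of_injOn hinj).symm
      _ ≤ (powersetCard (b-1) ((Finset.Icc 1 n).erase x)).card :=
          card_le_card (image_subset_iff.2 hmaps)
      _ = (n-1).choose (b-1) := by
          rw [card_powersetCard, card_erase_of_mem hxI, Nat.card_Icc,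
            show n + 1 - 1 - 1 = n - 1 from by omega]
      _ ≤ (n - 1).choose (b - 1) + (n - d).choose (b + 1 - d) := Nat.le_add_right _ _
  · -- a ≥ 2
    set 𝒜 := A.image (Gmap n) with h𝒜def
    set ℬc := B.image (fun t => (univ : Finset (Fin n)) \ Gmap n t) with hℬdef
    have hAsub : ∀ s ∈ A, s ⊆ Finset.Icc 1 n ∧ s.card = a := fun s hs => mem_powersetCard.1 (hA hs)
    have hBsub : ∀ t ∈ B, t ⊆ Finset.Icc 1 n ∧ t.card = b := fun t ht => mem_powersetCard.1 (hB ht)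
    have h𝒜card : 𝒜.card = A.card := card_image_of_injOn
      (fun s hs t ht h => Gmap_inj (hAsub s (mem_coe.1 hs)).1 (hAsub t (mem_coe.1 ht)).1 h)
    have hBcard : ℬc.card = B.card := by
      apply card_image_of_injOn
      intro s hs t ht h
      have h' : Gmap n s = Gmap n t := by
        have h2 := congrArg (fun u : Finset (Fin n) => (univ : Finset (Fin n)) \ u) h
        simpa [Finset.sdiff_sdiff_eq_self (subset_univ _)] using h2
      exact Gmap_inj (hBsub s (mem_coe.1 hs)).1 (hBsub t (mem_coe.1 ht)).1 h'
    have h𝒜sized : ∀ s ∈ 𝒜, s.card = a := by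
      intro s hs
      obtain ⟨u, hu, rfl⟩ := mem_image.1 hs
      rw [card_Gmap (hAsub u hu).1, (hAsub u hu).2]
    have hℬsized : ∀ C ∈ ℬc, C.card = n - b := by
      intro C hC
      obtain ⟨t, ht, rfl⟩ := mem_image.1 hC
      rw [card_sdiff_of_subset (subset_univ _), card_univ, Fintype.card_fin,
        card_Gmap (hBsub t ht).1, (hBsub t ht).2]
    have hdisj2 : ∀ s ∈ 𝒜, ∀ C ∈ ℬc, ¬ s ⊆ C := by
      intro S hS C hC hsubSC
      obtain ⟨s, hs, rfl⟩ := mem_image.1 hS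
      obtain ⟨t, ht, rfl⟩ := mem_image.1 hC
      obtain ⟨x, hx⟩ := hcross s hs t ht
      rw [mem_inter] at hx
      have hx1 := mem_Icc.1 ((hAsub s hs).1 hx.1)
      have hi1 := Gmap_mem_of_mem hx1.1 hx1.2 hx.1
      have hi2 := Gmap_mem_of_mem hx1.1 hx1.2 hx.2
      have hh := hsubSC hi1
      rw [mem_sdiff] at hh
      exact hh.2 hi2
    have hfin := main_fin n a b d ha2 hb hn hd2 hdb 𝒜 ℬc h𝒜sized hℬsized hdisj2
      (by rw [h𝒜card]; exact hAcard)
    rw [hBcard] at hfin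
    exact hfin
end

section
/- Let a, b, n be positive integers with n ≥ a + b, and let A ⊆ \binom{[n]}{a} and B ⊆ \binom{[n]}{b} be cross-intersecting families. If |A| ≥ \binom{n-ℓ}{a-ℓ} for some integer ℓ with 1 ≤ ℓ ≤ a, then |B| ≤ \binom{n}{b} − \binom{n-ℓ}{b}. -/
open Finset

open scoped FinsetFamily

theorem stmt_10 (n a b l : ℕ) (ha : 1 ≤ a) (hb : 1 ≤ b) (hn : a + b ≤ n)
    (hl1 : 1 ≤ l) (hla : l ≤ a)
    (A B : Finset (Finset ℕ))
    (hA : A ⊆ Finset.powersetCard a (Finset.Icc 1 n))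
    (hB : B ⊆ Finset.powersetCard b (Finset.Icc 1 n))
    (hcross : ∀ s ∈ A, ∀ t ∈ B, (s ∩ t).Nonempty)
    (hAcard : (n - l).choose (a - l) ≤ A.card) :
    B.card ≤ n.choose b - (n - l).choose b := by
  classical
  set F : Finset ℕ → Finset (Fin n) :=
    fun s => univ.filter (fun i : Fin n => (i : ℕ) + 1 ∈ s) with hF
  -- cardinality preservation
  have hcardF : ∀ s : Finset ℕ, s ⊆ Finset.Icc 1 n → (F s).card = s.card := by
    intro s hs
    refine Finset.card_bij (fun i _ => (i : ℕ) + 1) ?_ ?_ ?_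
    · intro i hi
      simp only [hF, Finset.mem_filter] at hi
      exact hi.2
    · intro i _ j _ h
      have h' : (i : ℕ) + 1 = (j : ℕ) + 1 := h
      exact Fin.ext (by omega)
    · intro x hx
      have hx1 : 1 ≤ x ∧ x ≤ n := by simpa [Finset.mem_Icc] using hs hx
      refine ⟨⟨x - 1, by omega⟩, ?_, by simp; omega⟩
      simp only [hF, Finset.mem_filter, Finset.mem_univ, true_and]
      have : x - 1 + 1 = x := by omega
      rwa [this]
  -- injectivity on subsets of Icc 1 n
  have hinjF : ∀ s t : Finset ℕ, s ⊆ Finset.Icc 1 n → t ⊆ Finset.Icc 1 n →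
      F s = F t → s = t := by
    intro s t hs ht h
    ext x
    have key : ∀ u v : Finset ℕ, u ⊆ Finset.Icc 1 n → F u = F v → x ∈ u → x ∈ v := by
      intro u v hu huv hx
      have hx1 : 1 ≤ x ∧ x ≤ n := by simpa [Finset.mem_Icc] using hu hx
      have hmem : (⟨x - 1, by omega⟩ : Fin n) ∈ F u := by
        simp only [hF, Finset.mem_filter, Finset.mem_univ, true_and]
        have : x - 1 + 1 = x := by omega
        rwa [this]
      rw [huv] at hmem
      simp only [hF, Finset.mem_filter, Finset.mem_univ, true_and] at hmem
      have : x - 1 + 1 = x := by omega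
      rwa [this] at hmem
    exact ⟨key s t hs h, key t s ht h.symm⟩
  -- nonempty intersection transfers
  have hintF : ∀ s t : Finset ℕ, s ⊆ Finset.Icc 1 n → (s ∩ t).Nonempty →
      ¬ Disjoint (F s) (F t) := by
    intro s t hs ⟨x, hx⟩
    rw [Finset.mem_inter] at hx
    have hx1 : 1 ≤ x ∧ x ≤ n := by simpa [Finset.mem_Icc] using hs hx.1
    intro hdisj
    have h1 : (⟨x - 1, by omega⟩ : Fin n) ∈ F s := by
      simp only [hF, Finset.mem_filter, Finset.mem_univ, true_and]
      have : x - 1 + 1 = x := by omega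
      rw [this]; exact hx.1
    have h2 : (⟨x - 1, by omega⟩ : Fin n) ∈ F t := by
      simp only [hF, Finset.mem_filter, Finset.mem_univ, true_and]
      have : x - 1 + 1 = x := by omega
      rw [this]; exact hx.2
    exact Finset.disjoint_left.1 hdisj h1 h2
  set 𝒜 : Finset (Finset (Fin n)) := A.image F with h𝒜
  set ℬ : Finset (Finset (Fin n)) := B.image F with hℬ
  have hAsub : ∀ s ∈ A, s ⊆ Finset.Icc 1 n ∧ s.card = a := by
    intro s hs
    have := hA hs
    rw [Finset.mem_powersetCard] at this
    exact this
  have hBsub : ∀ s ∈ B, s ⊆ Finset.Icc 1 n ∧ s.card = b := by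
    intro s hs
    have := hB hs
    rw [Finset.mem_powersetCard] at this
    exact this
  have hcard𝒜 : 𝒜.card = A.card := by
    apply Finset.card_image_of_injOn
    intro s hs t ht h
    exact hinjF s t (hAsub s hs).1 (hAsub t ht).1 h
  have hcardℬ : ℬ.card = B.card := by
    apply Finset.card_image_of_injOn
    intro s hs t ht h
    exact hinjF s t (hBsub s hs).1 (hBsub t ht).1 h
  have h𝒜sized : (𝒜 : Set (Finset (Fin n))).Sized a := by
    intro s hs
    simp only [h𝒜, Finset.coe_image, Set.mem_image, Finset.mem_coe] at hs
    obtain ⟨t, htA, rfl⟩ := hs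
    rw [hcardF t (hAsub t htA).1]
    exact (hAsub t htA).2
  have hℬsized : (ℬ : Set (Finset (Fin n))).Sized b := by
    intro s hs
    simp only [hℬ, Finset.coe_image, Set.mem_image, Finset.mem_coe] at hs
    obtain ⟨t, htB, rfl⟩ := hs
    rw [hcardF t (hBsub t htB).1]
    exact (hBsub t htB).2
  -- complements family
  have h𝒜csized : (↑(𝒜ᶜˢ) : Set (Finset (Fin n))).Sized (n - a) := by
    simpa using h𝒜sized.compls
  have h𝒜ccard : (n - l).choose (n - a) ≤ (𝒜ᶜˢ).card := by
    rw [Finset.card_compls, hcard𝒜]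
    have h1 : (n - l) - (a - l) = n - a := by omega
    have h2 : (n - l).choose (n - a) = (n - l).choose (a - l) := by
      rw [← h1, Nat.choose_symm (by omega)]
    rw [h2]
    exact hAcard
  have hkk := Finset.kruskal_katona_lovasz_form (n := n) (i := n - a - b) (r := n - a)
      (k := n - l) (by omega) (by omega) (by omega) h𝒜csized h𝒜ccard
  have hsub : n - a - (n - a - b) = b := by omega
  rw [hsub] at hkk
  set D : Finset (Finset (Fin n)) := ∂^[n - a - b] (𝒜ᶜˢ) with hD
  -- D is sized b
  have hDsized : ∀ T ∈ D, T.card = b := by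
    intro T hT
    rw [hD, Finset.mem_shadow_iterate_iff_exists_sdiff] at hT
    obtain ⟨C, hC, hTC, hcd⟩ := hT
    have hCcard : C.card = n - a := h𝒜csized hC
    have := Finset.card_sdiff_of_subset hTC
    have hTle := Finset.card_le_card hTC
    omega
  -- D is disjoint from ℬ
  have hdisj : Disjoint ℬ D := by
    rw [Finset.disjoint_left]
    intro T hTB hTD
    rw [hD, Finset.mem_shadow_iterate_iff_exists_sdiff] at hTD
    obtain ⟨C, hC, hTC, _⟩ := hTD
    rw [Finset.mem_compls] at hC
    obtain ⟨s, hsA, hs⟩ := Finset.mem_image.1 hC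
    obtain ⟨t, htB, rfl⟩ := Finset.mem_image.1 hTB
    have hd : Disjoint (F t) Cᶜ :=
      disjoint_compl_right.mono_left hTC
    rw [← hs] at hd
    exact hintF s t (hAsub s hsA).1 (hcross s hsA t htB) hd.symm
  -- count
  have hunion : ℬ ∪ D ⊆ Finset.powersetCard b (univ : Finset (Fin n)) := by
    intro T hT
    rw [Finset.mem_powersetCard]
    rcases Finset.mem_union.1 hT with h | h
    · exact ⟨Finset.subset_univ _, hℬsized h⟩
    · exact ⟨Finset.subset_univ _, hDsized T h⟩
  have htotal : ℬ.card + D.card ≤ n.choose b := by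
    have h1 := Finset.card_le_card hunion
    rw [Finset.card_union_of_disjoint hdisj] at h1
    rwa [Finset.card_powersetCard, Finset.card_univ, Fintype.card_fin] at h1
  omega
end

section
/- Let 1 ≤ t ≤ k and n > 2k − t, and let F ⊆ \binom{[n]}{k} be a shifted, saturated, t-intersecting family. If B ⊆ [n] with |B| ≤ k is a t-transversal of F that is minimal under containment (no proper subset of B is a t-transversal of F), then B ⊆ [2k − t] = {1, 2, …, 2k − t}. -/
open Finset

/-- The shifting partial order: for sets `A = {a₁ < … < a_k}` and `B = {b₁ < … < b_k}`
of the same size, `A ≺ B` iff `aᵢ ≤ bᵢ` for all `i`. -/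
def shiftPrec (A B : Finset ℕ) : Prop :=
  A.card = B.card ∧
  ∀ i : ℕ, (A.sort (· ≤ ·)).getD i 0 ≤ (B.sort (· ≤ ·)).getD i 0

private lemma countP_sort (S : Finset ℕ) (m : ℕ) :
    (S.sort (· ≤ ·)).countP (fun a => decide (a ≤ m)) = (S.filter (fun a => a ≤ m)).card := by
  have h1 : List.countP (fun a => decide (a ≤ m)) (S.sort (· ≤ ·))
      = List.countP (fun a => decide (a ≤ m)) S.toList :=
    List.Perm.countP_eq _ (S.sort_perm_toList (· ≤ ·))
  rw [h1, ← Multiset.coe_countP, Finset.coe_toList, Multiset.countP_eq_card_filter]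
  rfl

private lemma sorted_getElem_mono {l : List ℕ} (hl : l.Pairwise (· ≤ ·)) {p q : ℕ}
    (hq : q < l.length) (hpq : p ≤ q) : l[p]'(lt_of_le_of_lt hpq hq) ≤ l[q] := by
  rcases Nat.eq_or_lt_of_le hpq with rfl | h
  · exact le_refl _
  · exact List.pairwise_iff_getElem.mp hl p q (lt_of_le_of_lt hpq hq) hq h

private lemma getD_le_iff {l : List ℕ} (hl : l.Pairwise (· ≤ ·)) {i : ℕ} (hi : i < l.length)
    (m : ℕ) : l.getD i 0 ≤ m ↔ i < l.countP (fun a => decide (a ≤ m)) := by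
  rw [List.getD_eq_getElem l 0 hi]
  constructor
  · intro h
    have hlen : (l.take (i+1)).length = i + 1 := by
      rw [List.length_take]; omega
    have h1 : (l.take (i+1)).countP (fun a => decide (a ≤ m)) = (l.take (i+1)).length := by
      rw [List.countP_eq_length]
      intro a ha
      obtain ⟨j, hj, rfl⟩ := List.mem_iff_getElem.mp ha
      rw [List.getElem_take]
      simp only [decide_eq_true_eq]
      have hji : j ≤ i := by
        rw [List.length_take] at hj
        omega
      exact le_trans (sorted_getElem_mono hl hi hji) h
    have h2 := List.Sublist.countP_le (p := fun a => decide (a ≤ m)) (List.take_sublist (i+1) l)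
    omega
  · intro h
    by_contra hm
    push_neg at hm
    have hsplit : l.countP (fun a => decide (a ≤ m)) =
        (l.take i).countP (fun a => decide (a ≤ m)) +
        (l.drop i).countP (fun a => decide (a ≤ m)) := by
      conv_lhs => rw [← List.take_append_drop i l]
      rw [List.countP_append]
    have h2 : (l.drop i).countP (fun a => decide (a ≤ m)) = 0 := by
      rw [List.countP_eq_zero]
      intro a ha
      obtain ⟨j, hj, rfl⟩ := List.mem_iff_getElem.mp ha
      have hjl : i + j < l.length := by
        have := List.length_drop (i := i) (l := l)
        omega
      rw [List.getElem_drop]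
      simp only [decide_eq_true_eq, not_le]
      exact lt_of_lt_of_le hm (sorted_getElem_mono hl hjl (Nat.le_add_right i j))
    have h3 : (l.take i).countP (fun a => decide (a ≤ m)) ≤ i := by
      have := List.countP_le_length (p := fun a => decide (a ≤ m)) (l := l.take i)
      rw [List.length_take] at this
      omega
    omega

private lemma shiftPrec_of_counts {A B : Finset ℕ} (hcard : A.card = B.card)
    (h : ∀ m, (B.filter (fun a => a ≤ m)).card ≤ (A.filter (fun a => a ≤ m)).card) :
    shiftPrec A B := by
  refine ⟨hcard, fun i => ?_⟩
  by_cases hi : i < (B.sort (· ≤ ·)).length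
  · have hiA : i < (A.sort (· ≤ ·)).length := by
      rw [Finset.length_sort] at hi ⊢; omega
    set m := (B.sort (· ≤ ·)).getD i 0 with hm
    have h1 : i < (B.sort (· ≤ ·)).countP (fun a => decide (a ≤ m)) :=
      (getD_le_iff (Finset.pairwise_sort _ _) hi m).mp (le_refl _)
    rw [countP_sort] at h1
    have h2 : i < (A.sort (· ≤ ·)).countP (fun a => decide (a ≤ m)) := by
      rw [countP_sort]
      exact lt_of_lt_of_le h1 (h m)
    exact (getD_le_iff (Finset.pairwise_sort _ _) hiA m).mpr h2
  · rw [List.getD_eq_default]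
    · exact Nat.zero_le _
    · rw [Finset.length_sort] at hi ⊢
      omega

theorem stmt_12 (n k t : ℕ) (ht : 1 ≤ t) (htk : t ≤ k) (hn : 2 * k - t < n)
    (F : Finset (Finset ℕ)) (hF : F ⊆ Finset.powersetCard k (Finset.Icc 1 n))
    (hint : ∀ A ∈ F, ∀ C ∈ F, t ≤ (A ∩ C).card)
    (hshift : ∀ C ∈ F, ∀ A : Finset ℕ, A ⊆ Finset.Icc 1 n → shiftPrec A C → A ∈ F)
    (hsat : ∀ G ∈ Finset.powersetCard k (Finset.Icc 1 n), G ∉ F →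
      ¬ (∀ A ∈ insert G F, ∀ C ∈ insert G F, t ≤ (A ∩ C).card))
    (B : Finset ℕ) (hBn : B ⊆ Finset.Icc 1 n) (hBk : B.card ≤ k)
    (hBt : ∀ A ∈ F, t ≤ (B ∩ A).card)
    (hmin : ∀ B' ⊂ B, ¬ (∀ A ∈ F, t ≤ (B' ∩ A).card)) :
    B ⊆ Finset.Icc 1 (2 * k - t) := by
  intro c hc
  have hcIcc := Finset.mem_Icc.mp (hBn hc)
  rw [Finset.mem_Icc]
  refine ⟨hcIcc.1, ?_⟩
  by_contra hcb
  push_neg at hcb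
  -- minimality gives A ∈ F with |(B \ {c}) ∩ A| < t
  have hss : B.erase c ⊂ B := Finset.erase_ssubset hc
  have hmin' := hmin _ hss
  push_neg at hmin'
  obtain ⟨A, hA, hAlt⟩ := hmin'
  have hApc := Finset.mem_powersetCard.mp (hF hA)
  obtain ⟨hAn, hAk⟩ := hApc
  have hBA : t ≤ (B ∩ A).card := hBt A hA
  have hcA : c ∈ A := by
    by_contra hcA
    have hsub : B ∩ A ⊆ (B.erase c) ∩ A := by
      intro y hy
      rw [Finset.mem_inter] at hy ⊢
      exact ⟨Finset.mem_erase.mpr ⟨fun h => hcA (h ▸ hy.2), hy.1⟩, hy.2⟩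
    have := Finset.card_le_card hsub
    omega
  have hBAc : (B ∩ A).card = t := by
    have hsub : B ∩ A ⊆ insert c ((B.erase c) ∩ A) := by
      intro y hy
      rw [Finset.mem_inter] at hy
      by_cases hyc : y = c
      · exact Finset.mem_insert.mpr (Or.inl hyc)
      · exact Finset.mem_insert.mpr
          (Or.inr (Finset.mem_inter.mpr ⟨Finset.mem_erase.mpr ⟨hyc, hy.1⟩, hy.2⟩))
    have h1 := Finset.card_le_card hsub
    have h2 := Finset.card_insert_le c ((B.erase c) ∩ A)
    omega
  -- bound on |A ∪ B|
  have hAB : (A ∪ B).card ≤ 2 * k - t := by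
    have h1 := Finset.card_union_add_card_inter A B
    have h2 : t ≤ (A ∩ B).card := by rw [Finset.inter_comm]; omega
    omega
  -- find x < c outside A ∪ B
  have hex : ∃ x ∈ Finset.Icc 1 (c - 1), x ∉ A ∪ B := by
    by_contra hx
    push_neg at hx
    have hsub : Finset.Icc 1 (c - 1) ⊆ (A ∪ B).erase c := by
      intro y hy
      refine Finset.mem_erase.mpr ⟨?_, hx y hy⟩
      have := Finset.mem_Icc.mp hy
      omega
    have h1 := Finset.card_le_card hsub
    rw [Nat.card_Icc] at h1
    have h2 := Finset.card_erase_of_mem (Finset.mem_union_left B hcA)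
    omega
  obtain ⟨x, hxI, hxAB⟩ := hex
  rw [Finset.mem_Icc] at hxI
  have hxc : x < c := by omega
  have hxA : x ∉ A := fun h => hxAB (Finset.mem_union_left _ h)
  have hxB : x ∉ B := fun h => hxAB (Finset.mem_union_right _ h)
  set A' := insert x (A.erase c) with hA'
  have hA'card : A'.card = k := by
    rw [hA', Finset.card_insert_of_notMem (fun h => hxA (Finset.mem_of_mem_erase h)),
      Finset.card_erase_of_mem hcA, hAk]
    omega
  have hA'n : A' ⊆ Finset.Icc 1 n := by
    intro y hy
    rcases Finset.mem_insert.mp hy with rfl | hy'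
    · rw [Finset.mem_Icc]
      omega
    · exact hAn (Finset.mem_of_mem_erase hy')
  have hprec : shiftPrec A' A := by
    apply shiftPrec_of_counts
    · rw [hA'card, hAk]
    · intro m
      apply Finset.card_le_card_of_injOn (fun y => if y = c then x else y)
      · intro y hy
        rw [Finset.mem_coe, Finset.mem_filter] at hy ⊢
        by_cases hyc : y = c
        · subst hyc
          simp only [if_pos rfl]
          refine ⟨Finset.mem_insert_self _ _, le_trans (le_of_lt hxc) hy.2⟩
        · simp only [if_neg hyc]
          exact ⟨Finset.mem_insert_of_mem (Finset.mem_erase.mpr ⟨hyc, hy.1⟩), hy.2⟩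
      · intro y hy z hz hyz
        simp only [Finset.coe_filter, Set.mem_setOf_eq] at hy hz
        by_cases hyc : y = c <;> by_cases hzc : z = c
        · rw [hyc, hzc]
        · simp only [if_pos hyc, if_neg hzc] at hyz
          exact absurd (hyz ▸ hz.1) hxA
        · simp only [if_neg hyc, if_pos hzc] at hyz
          exact absurd (hyz.symm ▸ hy.1) hxA
        · simpa [if_neg hyc, if_neg hzc] using hyz
  have hA'F : A' ∈ F := hshift A hA A' hA'n hprec
  have hBA' := hBt A' hA'F
  have hBA'eq : B ∩ A' = (B ∩ A).erase c := by
    ext y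
    simp only [hA', Finset.mem_inter, Finset.mem_insert, Finset.mem_erase]
    constructor
    · rintro ⟨hyB, rfl | hy⟩
      · exact absurd hyB hxB
      · exact ⟨hy.1, hyB, hy.2⟩
    · rintro ⟨hyc, hyB, hyA⟩
      exact ⟨hyB, Or.inr ⟨hyc, hyA⟩⟩
  rw [hBA'eq, Finset.card_erase_of_mem (Finset.mem_inter.mpr ⟨hc, hcA⟩), hBAc] at hBA'
  omega
end

section
/- Let r ≥ 1 and k ≥ 1 be integers, let n ≥ (r+1)k, and let A, B ⊆ \binom{[n]}{k} be cross-intersecting families with |A| ≤ |B|. Then r·|A| + |B| ≤ \binom{n}{k}. -/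
open Finset

open scoped FinsetFamily

namespace CrossAux


/-- In any finset of a linear order, there is a downward-closed (within the finset)
subset of any size `m ≤ card`. -/
lemma exists_lower_subset {β : Type*} [LinearOrder β] (S : Finset β) (m : ℕ)
    (hm : m ≤ S.card) :
    ∃ T ⊆ S, T.card = m ∧ ∀ x ∈ T, ∀ y ∈ S, y ≤ x → y ∈ T := by
  classical
  set N := S.card with hN
  set e := S.orderEmbOfFin hN.symm with he
  have hlt : ∀ x ∈ Finset.range m, x < N := fun x hx => lt_of_lt_of_le (mem_range.1 hx) hm
  set T : Finset β := ((Finset.range m).attachFin hlt).image e with hT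
  have hinj : Function.Injective e := e.injective
  refine ⟨T, ?_, ?_, ?_⟩
  · intro x hx
    obtain ⟨i, _, rfl⟩ := mem_image.1 hx
    exact S.orderEmbOfFin_mem hN.symm i
  · rw [hT, card_image_of_injective _ hinj, card_attachFin, card_range]
  · intro x hx y hy hyx
    obtain ⟨i, hi, rfl⟩ := mem_image.1 hx
    have : y ∈ Set.range e := by rw [Finset.range_orderEmbOfFin]; exact hy
    obtain ⟨j, rfl⟩ := this
    have hji : j ≤ i := e.le_iff_le.1 hyx
    refine mem_image.2 ⟨j, ?_, rfl⟩
    have him : (i : ℕ) ∈ Finset.range m := (Finset.mem_attachFin hlt).1 hi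
    exact (Finset.mem_attachFin hlt).2 (mem_range.2 (lt_of_le_of_lt hji (mem_range.1 him)))




/-- There is an initial segment of colex of any given size at level `d`. -/
lemma exists_initSeg (n d m : ℕ)
    (hm : m ≤ (Finset.powersetCard d (Finset.univ : Finset (Fin n))).card) :
    ∃ 𝒞 : Finset (Finset (Fin n)), 𝒞.card = m ∧ Finset.Colex.IsInitSeg 𝒞 d := by
  classical
  set L := Finset.powersetCard d (Finset.univ : Finset (Fin n)) with hL
  have htc_inj : Function.Injective (toColex : Finset (Fin n) → Colex (Finset (Fin n))) :=
    fun s t h => by simpa using congrArg ofColex h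
  set S : Finset (Colex (Finset (Fin n))) := L.image toColex with hS
  have hcardS : S.card = L.card := card_image_of_injective _ htc_inj
  obtain ⟨T, hTS, hTcard, hTlow⟩ := exists_lower_subset S m (by rw [hcardS]; exact hm)
  refine ⟨T.image ofColex, ?_, ?_, ?_⟩
  · rw [card_image_of_injective _ ofColex.injective, hTcard]
  · intro s hs
    obtain ⟨x, hx, rfl⟩ := mem_image.1 hs
    obtain ⟨u, hu, rfl⟩ := mem_image.1 (hTS hx)
    simpa using (Finset.mem_powersetCard.1 hu).2
  · rintro s t hs ⟨hlt, hcard⟩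
    obtain ⟨x, hx, rfl⟩ := mem_image.1 hs
    have htS : toColex t ∈ S := by
      refine mem_image.2 ⟨t, Finset.mem_powersetCard.2 ⟨Finset.subset_univ _, hcard⟩, rfl⟩
    have : toColex t ∈ T := by
      refine hTlow x hx _ htS ?_
      simpa using hlt.le
    exact mem_image.2 ⟨toColex t, this, rfl⟩

/-- An initial segment at level `d` of size at most `(n-1).choose d` avoids the top element. -/
lemma initSeg_topfree {n d : ℕ} (hn : 1 ≤ n) {𝒞 : Finset (Finset (Fin n))}
    (h : Finset.Colex.IsInitSeg 𝒞 d) (hcard : 𝒞.card ≤ (n - 1).choose d) :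
    ∀ s ∈ 𝒞, (⟨n - 1, by omega⟩ : Fin n) ∉ s := by
  classical
  set top : Fin n := ⟨n - 1, by omega⟩ with htop
  by_contra hcon
  push_neg at hcon
  obtain ⟨s, hs, hstop⟩ := hcon
  have hP : Finset.powersetCard d (Finset.univ.erase top) ⊆ 𝒞 := by
    intro t ht
    obtain ⟨hts, htcard⟩ := Finset.mem_powersetCard.1 ht
    have htop_t : top ∉ t := fun hc => (Finset.mem_erase.1 (hts hc)).1 rfl
    refine h.2 hs ⟨?_, htcard⟩
    rw [Finset.Colex.toColex_lt_toColex]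
    constructor
    · intro hts'; exact htop_t (hts' ▸ hstop)
    · intro a _ hat
      refine ⟨top, hstop, htop_t, ?_⟩
      have : (a : ℕ) ≤ n - 1 := by omega
      exact this
  have hsP : s ∉ Finset.powersetCard d (Finset.univ.erase top) := by
    intro hc
    exact (Finset.mem_erase.1 ((Finset.mem_powersetCard.1 hc).1 hstop)).1 rfl
  have hcard2 : (n - 1).choose d + 1 ≤ 𝒞.card := by
    have h1 : (Finset.powersetCard d (Finset.univ.erase top)).card = (n - 1).choose d := by
      rw [Finset.card_powersetCard, Finset.card_erase_of_mem (Finset.mem_univ _),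
        Finset.card_univ, Fintype.card_fin]
    calc (n - 1).choose d + 1 = (insert s (Finset.powersetCard d (Finset.univ.erase top))).card := by
          rw [Finset.card_insert_of_notMem hsP, h1]
      _ ≤ 𝒞.card := Finset.card_le_card (Finset.insert_subset hs hP)
  omega




/-- Local LYM-type bound for families avoiding a fixed element. -/
lemma shadow_ratio {n e : ℕ} (he : 1 ≤ e) (top : Fin n) (F : Finset (Finset (Fin n)))
    (hF : (F : Set (Finset (Fin n))).Sized e) (htop : ∀ s ∈ F, top ∉ s) :
    e * F.card ≤ (n - e) * (∂ F).card := by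
  classical
  set P : Finset ((_ : Finset (Fin n)) × Fin n) := F.sigma (fun s => s) with hP
  set Q : Finset ((_ : Finset (Fin n)) × Fin n) :=
    (∂ F).sigma (fun b => (Finset.univ.erase top) \ b) with hQ
  have hPcard : P.card = e * F.card := by
    rw [hP, Finset.card_sigma]
    rw [Finset.sum_congr rfl (fun s hs => hF hs)]
    rw [Finset.sum_const, smul_eq_mul, mul_comm]
  have hQcard : Q.card = (n - e) * (∂ F).card := by
    rw [hQ, Finset.card_sigma]
    have hsum : ∀ b ∈ ∂ F, ((Finset.univ.erase top) \ b).card = n - e := by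
      intro b hb
      obtain ⟨s, hs, a, ha, rfl⟩ := Finset.mem_shadow_iff.1 hb
      have hsub : s.erase a ⊆ Finset.univ.erase top := by
        intro x hx
        refine Finset.mem_erase.2 ⟨?_, Finset.mem_univ _⟩
        intro hxe
        exact htop s hs (hxe ▸ (Finset.erase_subset _ _ hx))
      rw [Finset.card_sdiff_of_subset hsub, Finset.card_erase_of_mem (Finset.mem_univ _),
        Finset.card_univ, Fintype.card_fin, Finset.card_erase_of_mem ha, hF hs]
      have hcard : e - 1 ≤ n - 1 := by
        have := Finset.card_le_card hsub
        rw [Finset.card_erase_of_mem ha, hF hs, Finset.card_erase_of_mem (Finset.mem_univ _),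
          Finset.card_univ, Fintype.card_fin] at this
        exact this
      omega
    rw [Finset.sum_congr rfl hsum, Finset.sum_const, smul_eq_mul, mul_comm]
  rw [← hPcard, ← hQcard]
  apply Finset.card_le_card_of_injOn (fun p => ⟨p.1.erase p.2, p.2⟩)
  · rintro ⟨s, x⟩ hp
    obtain ⟨hs, hx⟩ := Finset.mem_sigma.1 hp
    refine Finset.mem_sigma.2 ⟨?_, ?_⟩
    · exact Finset.mem_shadow_iff.2 ⟨s, hs, x, hx, rfl⟩
    · refine Finset.mem_sdiff.2 ⟨Finset.mem_erase.2 ⟨?_, Finset.mem_univ _⟩, Finset.notMem_erase _ _⟩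
      intro hxe
      exact htop s hs (hxe ▸ hx)
  · rintro ⟨s, x⟩ hp ⟨t, y⟩ hq hfeq
    obtain ⟨hs, hx⟩ := Finset.mem_sigma.1 hp
    obtain ⟨ht, hy⟩ := Finset.mem_sigma.1 hq
    simp only [Sigma.mk.inj_iff, heq_eq_eq] at hfeq
    obtain ⟨herase, rfl⟩ := hfeq
    have hx' : x ∈ s := hx
    have hy' : x ∈ t := hy
    have : s = t := by
      rw [← Finset.insert_erase hx', ← Finset.insert_erase hy', herase]
    subst this
    rfl

/-- Iterated ratio bound. -/
lemma iterated_ratio {n : ℕ} (top : Fin n) :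
    ∀ (i d : ℕ) (𝒞 : Finset (Finset (Fin n))), (𝒞 : Set (Finset (Fin n))).Sized d →
      (∀ s ∈ 𝒞, top ∉ s) → i ≤ d → d ≤ n →
      (∏ t ∈ Finset.range i, (d - t)) * 𝒞.card ≤
        (∏ t ∈ Finset.range i, (n - d + t)) * (∂^[i] 𝒞).card := by
  intro i
  induction i with
  | zero => intro d 𝒞 _ _ _ _; simp
  | succ i ih =>
    intro d 𝒞 hsized htop hi hd
    have hd1 : 1 ≤ d := le_trans (Nat.succ_le_succ (Nat.zero_le _)) hi
    have h1 : d * 𝒞.card ≤ (n - d) * (∂ 𝒞).card := shadow_ratio hd1 top 𝒞 hsized htop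
    have hsh : ((∂ 𝒞 : Finset (Finset (Fin n))) : Set (Finset (Fin n))).Sized (d - 1) :=
      hsized.shadow
    have htop' : ∀ s ∈ ∂ 𝒞, top ∉ s := by
      intro s hs
      obtain ⟨u, hu, a, ha, rfl⟩ := Finset.mem_shadow_iff.1 hs
      intro hc
      exact htop u hu (Finset.erase_subset _ _ hc)
    have h2 := ih (d - 1) (∂ 𝒞) hsh htop' (by omega) (by omega)
    have hprod1 : (∏ t ∈ Finset.range (i + 1), (d - t)) =
        (∏ t ∈ Finset.range i, (d - 1 - t)) * d := by
      rw [Finset.prod_range_succ']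
      have h0 : d - 0 = d := by omega
      rw [h0]
      exact congrArg (· * d) (Finset.prod_congr rfl (fun t _ => by omega))
    have hprod2 : (∏ t ∈ Finset.range (i + 1), (n - d + t)) =
        (∏ t ∈ Finset.range i, (n - (d - 1) + t)) * (n - d) := by
      rw [Finset.prod_range_succ']
      have h0 : n - d + 0 = n - d := by omega
      rw [h0]
      exact congrArg (· * (n - d)) (Finset.prod_congr rfl (fun t _ => by omega))
    have hiter : (∂^[i + 1] 𝒞) = ∂^[i] (∂ 𝒞) := Function.iterate_succ_apply _ _ _
    calc (∏ t ∈ Finset.range (i + 1), (d - t)) * 𝒞.card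
        = (∏ t ∈ Finset.range i, (d - 1 - t)) * (d * 𝒞.card) := by rw [hprod1]; ring
      _ ≤ (∏ t ∈ Finset.range i, (d - 1 - t)) * ((n - d) * (∂ 𝒞).card) :=
          Nat.mul_le_mul_left _ h1
      _ = (n - d) * ((∏ t ∈ Finset.range i, (d - 1 - t)) * (∂ 𝒞).card) := by ring
      _ ≤ (n - d) * ((∏ t ∈ Finset.range i, (n - (d - 1) + t)) * (∂^[i] (∂ 𝒞)).card) :=
          Nat.mul_le_mul_left _ h2
      _ = (∏ t ∈ Finset.range (i + 1), (n - d + t)) * (∂^[i + 1] 𝒞).card := by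
          rw [hprod2, hiter]; ring





lemma key_ratio {n k i d : ℕ} (hk : 1 ≤ k) (hd : d = k + i) (hnd : n - d = k) (hdn : d ≤ n)
    (top : Fin n) (𝒞 : Finset (Finset (Fin n))) (hsized : (𝒞 : Set (Finset (Fin n))).Sized d)
    (htop : ∀ s ∈ 𝒞, top ∉ s) :
    d * 𝒞.card ≤ k * (∂^[i] 𝒞).card := by
  have H := iterated_ratio top i d 𝒞 hsized htop (by omega) hdn
  set s := (∂^[i] 𝒞).card with hs
  have hB : (∏ t ∈ Finset.range i, (n - d + t)) = ∏ t ∈ Finset.range i, (k + t) := by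
    exact Finset.prod_congr rfl (fun t _ => by omega)
  rw [hB] at H
  have hA : (∏ t ∈ Finset.range i, (d - t)) = ∏ t ∈ Finset.range i, (k + 1 + t) := by
    rw [← Finset.prod_range_reflect (fun j => k + 1 + j) i]
    exact Finset.prod_congr rfl (fun t ht => by
      have := Finset.mem_range.1 ht
      omega)
  rw [hA] at H
  have hkey : k * (∏ t ∈ Finset.range i, (k + 1 + t)) = d * (∏ t ∈ Finset.range i, (k + t)) := by
    have e1 : (∏ t ∈ Finset.range (i + 1), (k + t)) =
        (∏ t ∈ Finset.range i, (k + 1 + t)) * k := by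
      rw [Finset.prod_range_succ']
      have h0 : k + 0 = k := by omega
      rw [h0]
      exact congrArg (· * k) (Finset.prod_congr rfl (fun t _ => by omega))
    have e2 : (∏ t ∈ Finset.range (i + 1), (k + t)) =
        (∏ t ∈ Finset.range i, (k + t)) * (k + i) := Finset.prod_range_succ _ _
    have : (∏ t ∈ Finset.range i, (k + 1 + t)) * k = (∏ t ∈ Finset.range i, (k + t)) * (k + i) := by
      rw [← e1, e2]
    calc k * (∏ t ∈ Finset.range i, (k + 1 + t))
        = (∏ t ∈ Finset.range i, (k + 1 + t)) * k := by ring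
      _ = (∏ t ∈ Finset.range i, (k + t)) * (k + i) := this
      _ = d * (∏ t ∈ Finset.range i, (k + t)) := by rw [hd]; ring
  have hBpos : 0 < ∏ t ∈ Finset.range i, (k + t) := by
    apply Finset.prod_pos
    intro t _
    omega
  have H2 : (∏ t ∈ Finset.range i, (k + t)) * (d * 𝒞.card) ≤
      (∏ t ∈ Finset.range i, (k + t)) * (k * s) := by
    calc (∏ t ∈ Finset.range i, (k + t)) * (d * 𝒞.card)
        = (d * (∏ t ∈ Finset.range i, (k + t))) * 𝒞.card := by ring
      _ = (k * (∏ t ∈ Finset.range i, (k + 1 + t))) * 𝒞.card := by rw [hkey]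
      _ = k * ((∏ t ∈ Finset.range i, (k + 1 + t)) * 𝒞.card) := by ring
      _ ≤ k * ((∏ t ∈ Finset.range i, (k + t)) * s) := Nat.mul_le_mul_left _ H
      _ = (∏ t ∈ Finset.range i, (k + t)) * (k * s) := by ring
  exact Nat.le_of_mul_le_mul_left H2 hBpos








lemma choose_identity {n k : ℕ} (hk : 1 ≤ k) (hkn : k ≤ n) :
    n * ((n - 1).choose k) + k * n.choose k = n * n.choose k := by
  have h1 : n.choose k = (n - 1).choose (k - 1) + (n - 1).choose k := by
    have := Nat.choose_succ_succ (n - 1) (k - 1)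
    simp only [Nat.succ_eq_add_one] at this
    have hn' : n - 1 + 1 = n := by omega
    have hk' : k - 1 + 1 = k := by omega
    rw [hn', hk'] at this
    omega
  have h2 : n * (n - 1).choose (k - 1) = n.choose k * k := by
    have := Nat.add_one_mul_choose_eq (n - 1) (k - 1)
    have hn' : n - 1 + 1 = n := by omega
    have hk' : k - 1 + 1 = k := by omega
    rw [hn', hk'] at this
    exact this
  calc n * ((n - 1).choose k) + k * n.choose k
      = n * ((n - 1).choose k) + n * (n - 1).choose (k - 1) := by rw [h2]; ring
    _ = n * ((n - 1).choose (k - 1) + (n - 1).choose k) := by ring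
    _ = n * n.choose k := by rw [← h1]

lemma fallback_ineq {n k r : ℕ} (hr : 1 ≤ r) (hk : 1 ≤ k) (hn : (r + 1) * k ≤ n) :
    r * n.choose k ≤ (r + 1) * ((n - 1).choose k) := by
  have hkn : k ≤ n := by nlinarith
  have hn1 : 1 ≤ n := by omega
  have hid := choose_identity hk hkn
  have key : n * (r * n.choose k) + (r + 1) * (k * n.choose k) ≤
      n * ((r + 1) * ((n - 1).choose k)) + (r + 1) * (k * n.choose k) := by
    have e : n * ((r + 1) * ((n - 1).choose k)) + (r + 1) * (k * n.choose k)
        = (r + 1) * (n * n.choose k) := by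
      calc n * ((r + 1) * ((n - 1).choose k)) + (r + 1) * (k * n.choose k)
          = (r + 1) * (n * ((n - 1).choose k) + k * n.choose k) := by ring
        _ = (r + 1) * (n * n.choose k) := by rw [hid]
    rw [e]
    have : n * r + (r + 1) * k ≤ (r + 1) * n := by nlinarith
    calc n * (r * n.choose k) + (r + 1) * (k * n.choose k)
        = (n * r + (r + 1) * k) * n.choose k := by ring
      _ ≤ ((r + 1) * n) * n.choose k := Nat.mul_le_mul_right _ this
      _ = (r + 1) * (n * n.choose k) := by ring
  have key2 : n * (r * n.choose k) ≤ n * ((r + 1) * ((n - 1).choose k)) :=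
    Nat.le_of_add_le_add_right key
  exact Nat.le_of_mul_le_mul_left key2 (by omega)

theorem main_fin (n k r : ℕ) (hr : 1 ≤ r) (hk : 1 ≤ k) (hn : (r + 1) * k ≤ n)
    (A B : Finset (Finset (Fin n)))
    (hA : (A : Set (Finset (Fin n))).Sized k)
    (hB : (B : Set (Finset (Fin n))).Sized k)
    (hcross : ∀ s ∈ A, ∀ t ∈ B, (s ∩ t).Nonempty)
    (hAB : A.card ≤ B.card) :
    r * A.card + B.card ≤ n.choose k := by
  classical
  have h2k : 2 * k ≤ n := by
    have : 2 * k ≤ (r + 1) * k := Nat.mul_le_mul_right k (by omega)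
    omega
  have hkn : k ≤ n := by omega
  have hn1 : 1 ≤ n := by omega
  have hBle : B.card ≤ n.choose k := by
    have := Set.Sized.card_le hB
    simpa [Fintype.card_fin] using this
  rcases Finset.eq_empty_or_nonempty A with hAe | hAne
  · rw [hAe]
    simpa using hBle
  set d := n - k with hd
  set i := n - 2 * k with hi
  set 𝒟 := Aᶜˢ with h𝒟def
  have h𝒟 : (𝒟 : Set (Finset (Fin n))).Sized d := by
    have := hA.compls
    rw [Fintype.card_fin] at this
    exact this
  have hcard𝒟 : 𝒟.card = A.card := Finset.card_compls _
  set S := ∂^[i] 𝒟 with hSdef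
  have hSsized : (S : Set (Finset (Fin n))).Sized k := by
    have := h𝒟.shadow_iterate (k := i)
    have hdi : d - i = k := by omega
    rwa [hdi] at this
  have hdisj : Disjoint B S := by
    rw [Finset.disjoint_right]
    intro t htS htB
    rw [hSdef, Finset.mem_shadow_iterate_iff_exists_sdiff] at htS
    obtain ⟨c, hc, htc, -⟩ := htS
    rw [h𝒟def, Finset.mem_compls] at hc
    obtain ⟨x, hx⟩ := hcross _ hc _ htB
    rw [Finset.mem_inter] at hx
    have : x ∈ cᶜ := hx.1
    rw [Finset.mem_compl] at this
    exact this (htc hx.2)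
  have hBS : B.card + S.card ≤ n.choose k := by
    rw [← Finset.card_union_of_disjoint hdisj]
    have : ((B ∪ S : Finset (Finset (Fin n))) : Set (Finset (Fin n))).Sized k := by
      rw [Finset.coe_union, Set.sized_union]
      exact ⟨hB, hSsized⟩
    have := Set.Sized.card_le this
    simpa [Fintype.card_fin] using this
  have hAS : A.card + S.card ≤ n.choose k := by
    have := hAB
    omega
  by_cases hcase : A.card ≤ (n - 1).choose d
  · -- use initial segment and ratio bound
    obtain ⟨𝒞, h𝒞card, h𝒞init⟩ := exists_initSeg n d A.card (by
      rw [← hcard𝒟]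
      apply Finset.card_le_card
      intro c hc
      rw [Finset.mem_powersetCard]
      exact ⟨Finset.subset_univ _, h𝒟 hc⟩)
    have hkk := Finset.iterated_kk (k := i) h𝒟 (by rw [h𝒞card, hcard𝒟]) h𝒞init
    have htop : ∀ s ∈ 𝒞, (⟨n - 1, by omega⟩ : Fin n) ∉ s :=
      initSeg_topfree hn1 h𝒞init (by rw [h𝒞card]; exact hcase)
    have hratio := key_ratio (i := i) (d := d) hk (by omega) (by omega) (by omega)
      (⟨n - 1, by omega⟩ : Fin n) 𝒞 h𝒞init.1 htop
    have hrm : r * A.card ≤ S.card := by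
      have h1 : d * A.card ≤ k * S.card := by
        rw [← h𝒞card]
        calc d * 𝒞.card ≤ k * (∂^[i] 𝒞).card := hratio
          _ ≤ k * S.card := Nat.mul_le_mul_left _ hkk
      have hrk : r * k ≤ d := by
        have he : (r + 1) * k = r * k + k := by ring
        omega
      have h2 : k * (r * A.card) ≤ k * S.card := by
        calc k * (r * A.card) = (r * k) * A.card := by ring
          _ ≤ d * A.card := Nat.mul_le_mul_right _ hrk
          _ ≤ k * S.card := h1
      exact Nat.le_of_mul_le_mul_left h2 (by omega)
    omega
  · -- fallback: Lovász form gives S.card ≥ (n-1).choose k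
    push_neg at hcase
    have hlov := Finset.kruskal_katona_lovasz_form (n := n) (i := i) (r := d) (k := n - 1)
      (by omega) (by omega) (by omega) h𝒟 (by omega)
    have hdi : d - i = k := by omega
    rw [hdi] at hlov
    have hSge : (n - 1).choose k ≤ S.card := hlov
    have hfall : r * n.choose k ≤ (r + 1) * S.card := by
      calc r * n.choose k ≤ (r + 1) * ((n - 1).choose k) := fallback_ineq hr hk hn
        _ ≤ (r + 1) * S.card := Nat.mul_le_mul_left _ hSge
    -- combine: r*A.card + B.card + (r+1)*S.card = r*(A.card+S.card) + (B.card+S.card)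
    have hcomb : r * A.card + B.card + (r + 1) * S.card ≤ n.choose k + (r + 1) * S.card := by
      calc r * A.card + B.card + (r + 1) * S.card
          = r * (A.card + S.card) + (B.card + S.card) := by ring
        _ ≤ r * n.choose k + n.choose k := by
            have := Nat.mul_le_mul_left r hAS
            omega
        _ ≤ (r + 1) * S.card + n.choose k := by omega
        _ = n.choose k + (r + 1) * S.card := by ring
    exact Nat.le_of_add_le_add_right hcomb


end CrossAux

theorem stmt_14 (n k r : ℕ) (hr : 1 ≤ r) (hk : 1 ≤ k) (hn : (r + 1) * k ≤ n)
    (A B : Finset (Finset ℕ))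
    (hA : A ⊆ Finset.powersetCard k (Finset.Icc 1 n))
    (hB : B ⊆ Finset.powersetCard k (Finset.Icc 1 n))
    (hcross : ∀ s ∈ A, ∀ t ∈ B, (s ∩ t).Nonempty)
    (hAB : A.card ≤ B.card) :
    r * A.card + B.card ≤ n.choose k := by
  classical
  have hn1 : 1 ≤ n := by nlinarith
  set f : Fin n → ℕ := fun i => (i : ℕ) + 1 with hf
  have hfinj : Function.Injective f := by
    intro a b h
    have h' : (a : ℕ) + 1 = (b : ℕ) + 1 := h
    exact Fin.val_injective (by omega)
  set ψ : Finset (Fin n) → Finset ℕ := fun s => s.image f with hψ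
  have hψinj : Function.Injective ψ := Finset.image_injective hfinj
  have transfer : ∀ C : Finset (Finset ℕ), C ⊆ Finset.powersetCard k (Finset.Icc 1 n) →
      ((Finset.powersetCard k (Finset.univ : Finset (Fin n))).filter (fun s => ψ s ∈ C)).image ψ
        = C := by
    intro C hC
    apply Finset.Subset.antisymm
    · intro S hS
      obtain ⟨s, hs, rfl⟩ := Finset.mem_image.1 hS
      exact (Finset.mem_filter.1 hs).2
    · intro S hS
      obtain ⟨hSsub, hScard⟩ := Finset.mem_powersetCard.1 (hC hS)
      have hmem : ∀ x ∈ S, 1 ≤ x ∧ x ≤ n := fun x hx => Finset.mem_Icc.1 (hSsub hx)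
      set g : ℕ → Fin n := fun x => ⟨min (x - 1) (n - 1), by omega⟩ with hg
      have hkey : ∀ x ∈ S, f (g x) = x := by
        intro x hx
        obtain ⟨h1, h2⟩ := hmem x hx
        show min (x - 1) (n - 1) + 1 = x
        omega
      have himg : ψ (S.image g) = S := by
        rw [hψ]
        show (S.image g).image f = S
        rw [Finset.image_image]
        calc S.image (f ∘ g) = S.image id := Finset.image_congr (fun x hx => hkey x hx)
          _ = S := Finset.image_id
      have hginj : Set.InjOn g S := by
        intro x hx y hy hxy
        obtain ⟨hx1, hx2⟩ := hmem x hx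
        obtain ⟨hy1, hy2⟩ := hmem y hy
        have : min (x - 1) (n - 1) = min (y - 1) (n - 1) := congrArg Fin.val hxy
        omega
      refine Finset.mem_image.2 ⟨S.image g, Finset.mem_filter.2 ⟨?_, ?_⟩, himg⟩
      · refine Finset.mem_powersetCard.2 ⟨Finset.subset_univ _, ?_⟩
        rw [Finset.card_image_of_injOn hginj, hScard]
      · rw [himg]; exact hS
  set A' := (Finset.powersetCard k (Finset.univ : Finset (Fin n))).filter (fun s => ψ s ∈ A)
    with hA'
  set B' := (Finset.powersetCard k (Finset.univ : Finset (Fin n))).filter (fun s => ψ s ∈ B)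
    with hB'
  have hAim : A'.image ψ = A := transfer A hA
  have hBim : B'.image ψ = B := transfer B hB
  have hAcard : A'.card = A.card := by rw [← hAim, Finset.card_image_of_injective _ hψinj]
  have hBcard : B'.card = B.card := by rw [← hBim, Finset.card_image_of_injective _ hψinj]
  have hA'sized : ((A' : Finset (Finset (Fin n))) : Set (Finset (Fin n))).Sized k := by
    intro s hs
    exact (Finset.mem_powersetCard.1 (Finset.mem_filter.1 hs).1).2
  have hB'sized : ((B' : Finset (Finset (Fin n))) : Set (Finset (Fin n))).Sized k := by
    intro s hs
    exact (Finset.mem_powersetCard.1 (Finset.mem_filter.1 hs).1).2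
  have hcross' : ∀ s ∈ A', ∀ t ∈ B', (s ∩ t).Nonempty := by
    intro s hs t ht
    have h1 : ψ s ∈ A := (Finset.mem_filter.1 hs).2
    have h2 : ψ t ∈ B := (Finset.mem_filter.1 ht).2
    have h3 := hcross _ h1 _ h2
    have h4 : ψ s ∩ ψ t = ψ (s ∩ t) := (Finset.image_inter s t hfinj).symm
    rw [h4] at h3
    exact Finset.Nonempty.of_image h3
  have := CrossAux.main_fin n k r hr hk hn A' B' hA'sized hB'sized hcross'
    (by rw [hAcard, hBcard]; exact hAB)
  rwa [hAcard, hBcard] at this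
end

section
/- Let k ≥ 3 and n ≥ 2k, let F ⊆ \binom{[n]}{k} be an intersecting family, and let u ∈ [n] satisfy |F(u)| = d_1(F). If there exists v ∈ [n] \ {u} with |F(v)| > \binom{n-2}{k-2} and |F(ū, v)| ≤ \binom{n-4}{k-2}, then |F(ū, v)| > (1/2)·|F(ū)|. -/
open Finset
open scoped FinsetFamily

set_option linter.unusedVariables false


section LYM
variable {α : Type*} [DecidableEq α] [Fintype α]

lemma lym_step {𝒜 : Finset (Finset α)} {r : ℕ} (h𝒜 : (𝒜 : Set (Finset α)).Sized r)
    (hr1 : 1 ≤ r) (hrn : r ≤ Fintype.card α) :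
    𝒜.card * (Fintype.card α).choose (r - 1) ≤ #(∂ 𝒜) * (Fintype.card α).choose r := by
  set n := Fintype.card α
  have hstep := Finset.card_mul_le_card_shadow_mul h𝒜
  have hid : n.choose r * r = n.choose (r - 1) * (n - r + 1) := by
    have h1 : r = (r - 1) + 1 := by omega
    have h2 : n - (r - 1) = n - r + 1 := by omega
    calc n.choose r * r = n.choose ((r-1)+1) * ((r-1)+1) := by rw [← h1]
      _ = n.choose (r-1) * (n - (r-1)) := Nat.choose_succ_right_eq n (r-1)
      _ = n.choose (r-1) * (n - r + 1) := by rw [h2]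
  have key : (#𝒜 * n.choose (r - 1)) * r ≤ (#(∂ 𝒜) * n.choose r) * r := by
    calc (#𝒜 * n.choose (r - 1)) * r = (#𝒜 * r) * n.choose (r - 1) := by ring
      _ ≤ (#(∂ 𝒜) * (n - r + 1)) * n.choose (r - 1) := Nat.mul_le_mul_right _ hstep
      _ = #(∂ 𝒜) * (n.choose (r - 1) * (n - r + 1)) := by ring
      _ = #(∂ 𝒜) * (n.choose r * r) := by rw [← hid]
      _ = (#(∂ 𝒜) * n.choose r) * r := by ring
  exact Nat.le_of_mul_le_mul_right key (by omega)

lemma lym_iter :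
    ∀ (j : ℕ) (𝒜 : Finset (Finset α)) (r : ℕ), j ≤ r → r ≤ Fintype.card α →
      (𝒜 : Set (Finset α)).Sized r →
      𝒜.card * (Fintype.card α).choose (r - j) ≤ #(∂^[j] 𝒜) * (Fintype.card α).choose r := by
  intro j
  induction j with
  | zero => intro 𝒜 r _ _ _; simp
  | succ j ih =>
    intro 𝒜 r hj hr h𝒜
    set n := Fintype.card α
    have hIH := ih 𝒜 r (by omega) hr h𝒜
    have hSized : ((∂^[j] 𝒜 : Finset (Finset α)) : Set (Finset α)).Sized (r - j) :=
      h𝒜.shadow_iterate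
    have hstep := lym_step hSized (by omega) (by omega)
    have hiter : ∂^[j+1] 𝒜 = ∂ (∂^[j] 𝒜) := Function.iterate_succ_apply' _ _ _
    have hq : r - j - 1 = r - (j+1) := by omega
    rw [hq] at hstep
    have hpos : 0 < n.choose (r - j) := Nat.choose_pos (by omega)
    have key : (#𝒜 * n.choose (r - (j+1))) * n.choose (r - j)
        ≤ (#(∂^[j+1] 𝒜) * n.choose r) * n.choose (r - j) := by
      calc (#𝒜 * n.choose (r - (j+1))) * n.choose (r - j)
          = (#𝒜 * n.choose (r - j)) * n.choose (r - (j+1)) := by ring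
        _ ≤ (#(∂^[j] 𝒜) * n.choose r) * n.choose (r - (j+1)) := Nat.mul_le_mul_right _ hIH
        _ = (#(∂^[j] 𝒜) * n.choose (r - (j+1))) * n.choose r := by ring
        _ ≤ (#(∂ (∂^[j] 𝒜)) * n.choose (r - j)) * n.choose r := Nat.mul_le_mul_right _ hstep
        _ = (#(∂^[j+1] 𝒜) * n.choose r) * n.choose (r - j) := by rw [hiter]; ring
    exact Nat.le_of_mul_le_mul_right key hpos

end LYM

section Aux
variable {α β : Type*} [DecidableEq α] [DecidableEq β]

lemma shadow_image {f : α → β} (hf : Function.Injective f) (𝒜 : Finset (Finset α)) :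
    ∂ (𝒜.image (Finset.image f)) = (∂ 𝒜).image (Finset.image f) := by
  ext S
  constructor
  · intro hS
    obtain ⟨T, hT, a, ha, rfl⟩ := mem_shadow_iff.1 hS
    obtain ⟨A, hA, rfl⟩ := mem_image.1 hT
    obtain ⟨x, hx, rfl⟩ := mem_image.1 ha
    exact mem_image.2 ⟨A.erase x, mem_shadow_iff.2 ⟨A, hA, x, hx, rfl⟩,
      Finset.image_erase hf A x⟩
  · intro hS
    obtain ⟨T, hT, rfl⟩ := mem_image.1 hS
    obtain ⟨A, hA, a, ha, rfl⟩ := mem_shadow_iff.1 hT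
    exact mem_shadow_iff.2 ⟨A.image f, mem_image_of_mem _ hA, f a, mem_image_of_mem f ha,
      (Finset.image_erase hf A a).symm⟩

lemma shadow_iterate_image {f : α → β} (hf : Function.Injective f) (j : ℕ) :
    ∀ 𝒜 : Finset (Finset α),
      ∂^[j] (𝒜.image (Finset.image f)) = (∂^[j] 𝒜).image (Finset.image f) := by
  induction j with
  | zero => intro 𝒜; simp
  | succ j ih =>
    intro 𝒜
    rw [Function.iterate_succ_apply, Function.iterate_succ_apply, shadow_image hf, ih]

end Aux

lemma exists_lowerset {β γ : Type*} [DecidableEq β] [LinearOrder γ] {f : β → γ}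
    (hf : Function.Injective f) :
    ∀ (m : ℕ) (L : Finset β), m ≤ #L → ∃ C ⊆ L, #C = m ∧
      ∀ A ∈ C, ∀ B ∈ L, f B ≤ f A → B ∈ C := by
  intro m
  induction m with
  | zero => intro L _; exact ⟨∅, empty_subset _, card_empty, by simp⟩
  | succ m ih =>
    intro L hm
    obtain ⟨C, hCL, hCc, hCd⟩ := ih L (by omega)
    have hne : (L \ C).Nonempty := by
      rw [← Finset.card_pos, card_sdiff_of_subset hCL]; omega
    obtain ⟨B₀, hB₀, hmin⟩ := Finset.exists_min_image (L \ C) f hne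
    have hB₀L : B₀ ∈ L := (mem_sdiff.1 hB₀).1
    have hB₀C : B₀ ∉ C := (mem_sdiff.1 hB₀).2
    refine ⟨insert B₀ C, insert_subset hB₀L hCL,
      by rw [card_insert_of_notMem hB₀C, hCc], ?_⟩
    intro A hA B hB hle
    rcases mem_insert.1 hA with rfl | hA'
    · by_cases hBC : B ∈ C
      · exact mem_insert_of_mem hBC
      · have h1 := hmin B (mem_sdiff.2 ⟨hB, hBC⟩)
        have h2 : f B = f A := le_antisymm hle h1
        rw [hf h2]; exact mem_insert_self _ _
    · exact mem_insert_of_mem (hCd A hA' B hB hle)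

lemma keyKK (N k : ℕ) (hk : 3 ≤ k) (hN : 2 * k ≤ N + 2)
    (D : Finset (Finset (Fin N))) (hD : ∀ A ∈ D, #A = k)
    (W : Finset (Finset (Fin N)))
    (hWmem : ∀ S : Finset (Fin N), #S = k - 2 → (∃ A ∈ D, Disjoint S A) → S ∈ W)
    (hWcard : #W < (N - 2).choose (k - 2)) : #D ≤ #W := by
  classical
  set s := N - k with hs
  set t := k - 2 with ht
  set i := s - t with hi
  have hkN : k ≤ N := by omega
  set C : Finset (Finset (Fin N)) := D.image compl with hC
  have hCs : (C : Set (Finset (Fin N))).Sized s := by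
    intro B hB
    simp only [hC, coe_image, Set.mem_image, mem_coe] at hB
    obtain ⟨A, hA, rfl⟩ := hB
    rw [Finset.card_compl, hD A hA, Fintype.card_fin]
  have hCD : #C = #D := card_image_of_injective _ compl_injective
  have hsub : ∂^[i] C ⊆ W := by
    intro S hS
    obtain ⟨B, hB, hSB, hcard⟩ := mem_shadow_iterate_iff_exists_sdiff.1 hS
    obtain ⟨A, hA, rfl⟩ := mem_image.1 hB
    have hBc : #(Aᶜ) = s := by rw [Finset.card_compl, hD A hA, Fintype.card_fin]
    have hScard : #S = t := by
      have h1 := card_sdiff_add_card_eq_card hSB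
      omega
    have hdisj : Disjoint S A := by
      rw [Finset.disjoint_left]
      intro x hxS hxA
      have hx := hSB hxS
      rw [Finset.mem_compl] at hx
      exact hx hxA
    exact hWmem S hScard ⟨A, hA, hdisj⟩
  have hshadW : #(∂^[i] C) ≤ #W := card_le_card hsub
  rcases le_or_gt ((N-2).choose s) (#C) with hbig | hsmall
  · exfalso
    have hlov := Finset.kruskal_katona_lovasz_form (show i ≤ s by omega)
      (show s ≤ N - 2 by omega) (show N - 2 ≤ N by omega) hCs hbig
    have hsi : s - i = t := by omega
    rw [hsi] at hlov
    omega
  · set M := N - 2 with hM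
    have hsM : s ≤ M := by omega
    have hMN : M ≤ N := by omega
    set m := #C with hm
    have hLcard : m ≤ #(powersetCard s (univ : Finset (Fin M))) := by
      rw [card_powersetCard, card_univ, Fintype.card_fin]; omega
    obtain ⟨C₀, hC₀L, hC₀card, hC₀low⟩ :=
      exists_lowerset (f := fun A : Finset (Fin M) => toColex A)
        toColex.injective m _ hLcard
    have hC₀s : (C₀ : Set (Finset (Fin M))).Sized s := by
      intro A hA
      exact (mem_powersetCard.1 (hC₀L hA)).2
    have hlym := lym_iter i C₀ s (by omega) (by rw [Fintype.card_fin]; omega) hC₀s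
    have hchooseeq : (Fintype.card (Fin M)).choose (s - i) = (Fintype.card (Fin M)).choose s := by
      rw [Fintype.card_fin]
      have h1 : s - i = t := by omega
      have h2 : t = M - s := by omega
      rw [h1, h2]
      exact Nat.choose_symm hsM
    have hpos : 0 < (Fintype.card (Fin M)).choose s := by
      rw [Fintype.card_fin]; exact Nat.choose_pos hsM
    rw [hC₀card, hchooseeq] at hlym
    have hmle : m ≤ #(∂^[i] C₀) := Nat.le_of_mul_le_mul_right hlym hpos
    -- map up to Fin N
    set f : Fin M → Fin N := Fin.castLE hMN with hf
    have hfmono : StrictMono f := Fin.strictMono_castLE hMN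
    have hfinj : Function.Injective f := hfmono.injective
    have himginj : Function.Injective (Finset.image f) := Finset.image_injective hfinj
    set 𝒞 : Finset (Finset (Fin N)) := C₀.image (Finset.image f) with h𝒞
    have h𝒞card : #𝒞 = m := by rw [h𝒞, card_image_of_injective _ himginj, hC₀card]
    have hMltN : M < N := by omega
    have h𝒞init : Finset.Colex.IsInitSeg 𝒞 s := by
      constructor
      · intro A hA
        simp only [h𝒞, coe_image, Set.mem_image, mem_coe] at hA
        obtain ⟨A₀, hA₀, rfl⟩ := hA
        rw [card_image_of_injective _ hfinj]
        exact hC₀s hA₀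
      · rintro A' B' hA' ⟨hlt, hBcard⟩
        obtain ⟨A₀, hA₀, rfl⟩ := mem_image.1 hA'
        set c : Fin N := ⟨M, hMltN⟩ with hc
        have hAb : ∀ b ∈ Finset.image f A₀, b < c := by
          intro b hb
          obtain ⟨a, _, rfl⟩ := mem_image.1 hb
          have : (f a : ℕ) < M := a.isLt
          exact Fin.lt_def.2 this
        have hBb : ∀ b ∈ B', b < c := Finset.Colex.forall_lt_mono hlt.le hAb
        set B₀ : Finset (Fin M) := (univ : Finset (Fin M)).filter (fun j => f j ∈ B') with hB₀def
        have himgB : Finset.image f B₀ = B' := by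
          ext b
          constructor
          · intro hb
            obtain ⟨j, hj, rfl⟩ := mem_image.1 hb
            exact (mem_filter.1 hj).2
          · intro hb
            have hbM : (b : ℕ) < M := hBb b hb
            have hfb : f ⟨(b : ℕ), hbM⟩ = b := by
              apply Fin.ext
              simp [hf]
            refine mem_image.2 ⟨⟨(b : ℕ), hbM⟩, mem_filter.2 ⟨mem_univ _, ?_⟩, hfb⟩
            rw [hfb]; exact hb
        have hB₀card : #B₀ = s := by
          have h1 : #(B₀.image f) = #B₀ := card_image_of_injective _ hfinj
          rw [himgB] at h1
          omega
        have hcolex : toColex B₀ ≤ toColex A₀ := by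
          apply le_of_lt
          rw [← Finset.Colex.toColex_image_lt_toColex_image hfmono]
          rw [himgB]
          exact hlt
        have hB₀mem : B₀ ∈ C₀ :=
          hC₀low A₀ hA₀ B₀ (mem_powersetCard.2 ⟨subset_univ _, hB₀card⟩) hcolex
        exact mem_image.2 ⟨B₀, hB₀mem, himgB⟩
    have hkk : #(∂^[i] 𝒞) ≤ #(∂^[i] C) :=
      Finset.iterated_kk hCs (by omega) h𝒞init
    have hshadeq : #(∂^[i] 𝒞) = #(∂^[i] C₀) := by
      rw [h𝒞, shadow_iterate_image hfinj, card_image_of_injective _ himginj]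
    calc #D = m := hCD.symm
      _ ≤ #(∂^[i] C₀) := hmle
      _ = #(∂^[i] 𝒞) := hshadeq.symm
      _ ≤ #(∂^[i] C) := hkk
      _ ≤ #W := hshadW

theorem stmt_15 (n k : ℕ) (hk : 3 ≤ k) (hn : 2 * k ≤ n)
    (F : Finset (Finset ℕ)) (hF : F ⊆ Finset.powersetCard k (Finset.Icc 1 n))
    (hint : ∀ A ∈ F, ∀ B ∈ F, (A ∩ B).Nonempty)
    (u : ℕ) (hu : u ∈ Finset.Icc 1 n) (hdu : degree F u = nthDegree n F 1)
    (v : ℕ) (hv : v ∈ Finset.Icc 1 n) (hvu : v ≠ u)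
    (hdv : (n - 2).choose (k - 2) < degree F v)
    (hbar : (F.filter fun A => v ∈ A ∧ u ∉ A).card ≤ (n - 4).choose (k - 2)) :
    (F.filter fun A => u ∉ A).card < 2 * (F.filter fun A => v ∈ A ∧ u ∉ A).card := by
  classical
  -- basic facts about members of F
  have hmem : ∀ A ∈ F, A ⊆ Finset.Icc 1 n ∧ #A = k := by
    intro A hA
    exact mem_powersetCard.1 (hF hA)
  set E := F.filter (fun A => v ∈ A ∧ u ∉ A) with hE
  set D := F.filter (fun A => u ∉ A ∧ v ∉ A) with hD
  set Fuv := F.filter (fun A => u ∈ A ∧ v ∈ A) with hFuv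
  -- partition of the u-avoiding family
  have hsplit1 : #(F.filter fun A => u ∉ A) = #E + #D := by
    have h1 := Finset.card_filter_add_card_filter_not
      (s := F.filter (fun A => u ∉ A)) (p := fun A => v ∈ A)
    rw [Finset.filter_filter, Finset.filter_filter] at h1
    have e1 : F.filter (fun A => u ∉ A ∧ v ∈ A) = E := by
      rw [hE]; ext A; simp only [Finset.mem_filter]; tauto
    have e2 : F.filter (fun A => u ∉ A ∧ ¬ v ∈ A) = D := by rw [hD]
    rw [e1, e2] at h1
    omega
  have hsplit2 : degree F v = #Fuv + #E := by
    have h1 := Finset.card_filter_add_card_filter_not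
      (s := F.filter (fun A => v ∈ A)) (p := fun A => u ∈ A)
    rw [Finset.filter_filter, Finset.filter_filter] at h1
    have e1 : F.filter (fun A => v ∈ A ∧ u ∈ A) = Fuv := by
      rw [hFuv]; ext A; simp only [Finset.mem_filter]; tauto
    have e2 : F.filter (fun A => v ∈ A ∧ ¬ u ∈ A) = E := by rw [hE]
    rw [e1, e2] at h1
    rw [degree]
    omega
  suffices hDE : #D < #E by omega
  -- ground set X
  set X := ((Finset.Icc 1 n).erase u).erase v with hXdef
  have hvu' : v ∈ (Finset.Icc 1 n).erase u := Finset.mem_erase.2 ⟨hvu, hv⟩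
  have hXcard : #X = n - 2 := by
    rw [hXdef, Finset.card_erase_of_mem hvu', Finset.card_erase_of_mem hu, Nat.card_Icc]
    omega
  have hmemX : ∀ x, x ∈ X ↔ (x ≠ v ∧ x ≠ u ∧ x ∈ Finset.Icc 1 n) := by
    intro x
    rw [hXdef, Finset.mem_erase, Finset.mem_erase]
  have hAX : ∀ A ∈ F, u ∉ A → v ∉ A → A ⊆ X := by
    intro A hA huA hvA x hx
    rw [hmemX]
    exact ⟨fun h => hvA (h ▸ hx), fun h => huA (h ▸ hx), (hmem A hA).1 hx⟩
  -- the trace family of sets containing u and v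
  set Hmb := Fuv.image (fun B => (B.erase u).erase v) with hHmb
  have htraceX : ∀ B ∈ Fuv, (B.erase u).erase v ⊆ X := by
    intro B hB x hx
    rw [Finset.mem_erase] at hx
    obtain ⟨hxv, hx2⟩ := hx
    rw [Finset.mem_erase] at hx2
    obtain ⟨hxu, hx3⟩ := hx2
    rw [hmemX]
    exact ⟨hxv, hxu, (hmem B (Finset.mem_of_mem_filter B hB)).1 hx3⟩
  have htracecard : ∀ B ∈ Fuv, #((B.erase u).erase v) = k - 2 := by
    intro B hB
    obtain ⟨hBF, huB, hvB⟩ := Finset.mem_filter.1 hB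
    have hvB' : v ∈ B.erase u := Finset.mem_erase.2 ⟨hvu, hvB⟩
    rw [Finset.card_erase_of_mem hvB', Finset.card_erase_of_mem huB,
      (hmem B hBF).2]
    omega
  have hrec : ∀ B ∈ Fuv, insert u (insert v ((B.erase u).erase v)) = B := by
    intro B hB
    obtain ⟨hBF, huB, hvB⟩ := Finset.mem_filter.1 hB
    have hvB' : v ∈ B.erase u := Finset.mem_erase.2 ⟨hvu, hvB⟩
    rw [Finset.insert_erase hvB', Finset.insert_erase huB]
  have hHcard : #Hmb = #Fuv := by
    rw [hHmb]
    apply Finset.card_image_of_injOn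
    intro B1 h1 B2 h2 heq
    have heq' : (B1.erase u).erase v = (B2.erase u).erase v := heq
    have e1 := hrec B1 (Finset.mem_coe.1 h1)
    have e2 := hrec B2 (Finset.mem_coe.1 h2)
    rw [← e1, ← e2, heq']
  have hHsub : Hmb ⊆ Finset.powersetCard (k - 2) X := by
    intro S hS
    obtain ⟨B, hB, rfl⟩ := Finset.mem_image.1 hS
    exact Finset.mem_powersetCard.2 ⟨htraceX B hB, htracecard B hB⟩
  -- the family of (k-2)-subsets of X disjoint from some member of D
  set W := (Finset.powersetCard (k - 2) X).filter (fun S => ∃ A ∈ D, Disjoint S A) with hW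
  have hWsub : W ⊆ Finset.powersetCard (k - 2) X := Finset.filter_subset _ _
  have hdisjWH : Disjoint W Hmb := by
    rw [Finset.disjoint_left]
    intro S hSW hSH
    obtain ⟨_, A, hAD, hdisj⟩ := Finset.mem_filter.1 hSW
    obtain ⟨B, hB, rfl⟩ := Finset.mem_image.1 hSH
    obtain ⟨hAF, huA, hvA⟩ := Finset.mem_filter.1 hAD
    obtain ⟨hBF, huB, hvB⟩ := Finset.mem_filter.1 hB
    obtain ⟨x, hx⟩ := hint A hAF B hBF
    rw [Finset.mem_inter] at hx
    have hxS : x ∈ (B.erase u).erase v := by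
      rw [Finset.mem_erase, Finset.mem_erase]
      exact ⟨fun h => hvA (h ▸ hx.1), fun h => huA (h ▸ hx.1), hx.2⟩
    exact Finset.disjoint_left.1 hdisj hxS hx.1
  have hWHle : #W + #Hmb ≤ (n - 2).choose (k - 2) := by
    have h1 : W ∪ Hmb ⊆ Finset.powersetCard (k - 2) X := Finset.union_subset hWsub hHsub
    have h2 := Finset.card_le_card h1
    rw [Finset.card_union_of_disjoint hdisjWH] at h2
    rwa [Finset.card_powersetCard, hXcard] at h2
  have hWE : #W < #E := by omega
  -- transfer to Fin (n-2)
  set N := n - 2 with hN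
  have hXN : #X = N := hXcard
  set g : Fin N → ℕ := fun i => ((X.orderIsoOfFin hXN i : X) : ℕ) with hg
  have hginj : Function.Injective g := by
    intro a b hab
    exact (X.orderIsoOfFin hXN).injective (Subtype.ext hab)
  have hgmem : ∀ i, g i ∈ X := fun i => (X.orderIsoOfFin hXN i).2
  have hgimg : ∀ A : Finset ℕ, A ⊆ X →
      ((univ : Finset (Fin N)).filter (fun i => g i ∈ A)).image g = A := by
    intro A hAX'
    ext a
    constructor
    · intro ha
      obtain ⟨i, hi, rfl⟩ := Finset.mem_image.1 ha
      exact (Finset.mem_filter.1 hi).2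
    · intro ha
      have haX : a ∈ X := hAX' ha
      refine Finset.mem_image.2 ⟨(X.orderIsoOfFin hXN).symm ⟨a, haX⟩, ?_, ?_⟩
      · refine Finset.mem_filter.2 ⟨Finset.mem_univ _, ?_⟩
        rw [hg]
        simp only [OrderIso.apply_symm_apply]
        exact ha
      · rw [hg]
        simp only [OrderIso.apply_symm_apply]
  set D' := (Finset.powersetCard k (univ : Finset (Fin N))).filter
    (fun T => T.image g ∈ D) with hD'
  have hDinD' : ∀ A ∈ D, ((univ : Finset (Fin N)).filter (fun i => g i ∈ A)) ∈ D' ∧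
      ((univ : Finset (Fin N)).filter (fun i => g i ∈ A)).image g = A := by
    intro A hAD
    obtain ⟨hAF, huA, hvA⟩ := Finset.mem_filter.1 hAD
    have hAX' : A ⊆ X := hAX A hAF huA hvA
    have himg := hgimg A hAX'
    have hcardT : #((univ : Finset (Fin N)).filter (fun i => g i ∈ A)) = k := by
      have h1 : #(((univ : Finset (Fin N)).filter (fun i => g i ∈ A)).image g)
          = #((univ : Finset (Fin N)).filter (fun i => g i ∈ A)) :=
        Finset.card_image_of_injective _ hginj
      rw [himg] at h1
      rw [← h1, (hmem A hAF).2]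
    refine ⟨Finset.mem_filter.2 ⟨Finset.mem_powersetCard.2 ⟨Finset.subset_univ _, hcardT⟩, ?_⟩, himg⟩
    rw [himg]
    exact hAD
  have hDD' : #D' = #D := by
    apply Finset.card_bij (fun T _ => T.image g)
    · intro T hT
      exact (Finset.mem_filter.1 hT).2
    · intro T1 h1 T2 h2 heq
      exact Finset.image_injective hginj heq
    · intro A hAD
      exact ⟨_, (hDinD' A hAD).1, (hDinD' A hAD).2⟩
  set W' := (Finset.powersetCard (k - 2) (univ : Finset (Fin N))).filter
    (fun S => ∃ T ∈ D', Disjoint S T) with hW'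
  have hWW' : #W' = #W := by
    apply Finset.card_bij (fun S _ => S.image g)
    · intro S hS
      obtain ⟨hS1, T, hTD', hdisj⟩ := Finset.mem_filter.1 hS
      have hcardS := (Finset.mem_powersetCard.1 hS1).2
      obtain ⟨hT1, hTD⟩ := Finset.mem_filter.1 hTD'
      refine Finset.mem_filter.2 ⟨Finset.mem_powersetCard.2
        ⟨?_, by rw [Finset.card_image_of_injective _ hginj, hcardS]⟩, T.image g, hTD, ?_⟩
      · intro a ha
        obtain ⟨i, _, rfl⟩ := Finset.mem_image.1 ha
        exact hgmem i
      · rw [Finset.disjoint_left]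
        intro x hx1 hx2
        obtain ⟨i, hiS, rfl⟩ := Finset.mem_image.1 hx1
        obtain ⟨j, hjT, hji⟩ := Finset.mem_image.1 hx2
        have : j = i := hginj hji
        subst this
        exact Finset.disjoint_left.1 hdisj hiS hjT
    · intro S1 h1 S2 h2 heq
      exact Finset.image_injective hginj heq
    · intro S hSW
      obtain ⟨hS1, A, hAD, hdisj⟩ := Finset.mem_filter.1 hSW
      obtain ⟨hSX, hScard⟩ := Finset.mem_powersetCard.1 hS1
      set S' := (univ : Finset (Fin N)).filter (fun i => g i ∈ S) with hS'
      have himgS : S'.image g = S := hgimg S hSX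
      have hcardS' : #S' = k - 2 := by
        have h1 : #(S'.image g) = #S' := Finset.card_image_of_injective _ hginj
        rw [himgS] at h1
        omega
      obtain ⟨hTD', himgT⟩ := hDinD' A hAD
      refine ⟨S', Finset.mem_filter.2 ⟨Finset.mem_powersetCard.2
        ⟨Finset.subset_univ _, hcardS'⟩, ?_⟩, himgS⟩
      refine ⟨_, hTD', ?_⟩
      rw [Finset.disjoint_left]
      intro i hiS' hiT
      have h1 : g i ∈ S := (Finset.mem_filter.1 hiS').2
      have h2 : g i ∈ A := by
        rw [← himgT]
        exact Finset.mem_image_of_mem g hiT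
      exact Finset.disjoint_left.1 hdisj h1 h2
  -- apply the key lemma
  have hkey : #D' ≤ #W' := by
    apply keyKK N k hk (by omega) D' ?_ W' ?_ ?_
    · intro T hT
      exact (Finset.mem_powersetCard.1 (Finset.mem_filter.1 hT).1).2
    · intro S hScard hex
      exact Finset.mem_filter.2 ⟨Finset.mem_powersetCard.2 ⟨Finset.subset_univ _, hScard⟩, hex⟩
    · have h1 : N - 2 = n - 4 := by omega
      rw [h1, hWW']
      omega
  omega
end

section
/- Let 1 ≤ t < k and n ≥ \binom{t+2}{2}·k² (where \binom{t+2}{2} = (t+2)(t+1)/2), and let F ⊆ \binom{[n]}{k} be a nonempty saturated t-intersecting family with τ_t(F) ≥ t + 2. Then d_{1+τ_t(F)}(F) < \binom{n−t−1}{k−t−1}. -/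
open Finset

/-- The `t`-covering number of `F` on the ground set `[n]`: the minimum size of a
`t`-transversal, i.e. of a set `T ⊆ [n]` with `|T ∩ A| ≥ t` for all `A ∈ F`. -/
noncomputable def tauT (n t : ℕ) (F : Finset (Finset ℕ)) : ℕ :=
  sInf {m : ℕ | ∃ T ⊆ Finset.Icc 1 n, T.card = m ∧ ∀ A ∈ F, t ≤ (T ∩ A).card}

lemma card_Icc1 (n : ℕ) : (Finset.Icc 1 n).card = n := by
  rw [Nat.card_Icc]; omega

lemma count_superset_le (n k τ : ℕ) (F : Finset (Finset ℕ))
    (hF : F ⊆ Finset.powersetCard k (Finset.Icc 1 n))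
    (A : Finset ℕ) (hA : A ⊆ Finset.Icc 1 n) (hAc : A.card = τ) :
    (F.filter (fun G => A ⊆ G)).card ≤ (n - τ).choose (k - τ) := by
  classical
  have h1 : (F.filter (fun G => A ⊆ G)).card
      ≤ (Finset.powersetCard (k - τ) (Finset.Icc 1 n \ A)).card := by
    apply Finset.card_le_card_of_injOn (fun G => G \ A)
    · intro G hG
      simp only [mem_coe, mem_filter] at hG
      obtain ⟨hGF, hAG⟩ := hG
      obtain ⟨hGI, hGc⟩ := Finset.mem_powersetCard.mp (hF hGF)
      refine Finset.mem_powersetCard.mpr ⟨Finset.sdiff_subset_sdiff hGI le_rfl, ?_⟩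
      rw [Finset.card_sdiff_of_subset hAG, hGc, hAc]
    · intro G hG G' hG' h
      simp only [coe_filter, Set.mem_setOf_eq] at hG hG'
      have : G \ A ∪ A = G' \ A ∪ A := by simp only at h; rw [h]
      rwa [Finset.sdiff_union_of_subset hG.2, Finset.sdiff_union_of_subset hG'.2] at this
  rwa [Finset.card_powersetCard, Finset.card_sdiff_of_subset hA, card_Icc1, hAc] at h1

lemma branch (n k t τ : ℕ) (F : Finset (Finset ℕ))
    (hF : F ⊆ Finset.powersetCard k (Finset.Icc 1 n))
    (hint : ∀ A ∈ F, ∀ B ∈ F, t ≤ (A ∩ B).card)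
    (hmin : ∀ A : Finset ℕ, A ⊆ Finset.Icc 1 n → A.card < τ →
      ¬ (∀ G ∈ F, t ≤ (A ∩ G).card)) :
    ∀ (d : ℕ) (A : Finset ℕ), A ⊆ Finset.Icc 1 n → A.card + d = τ →
      (F.filter (fun G => A ⊆ G)).card ≤ k ^ d * (n - τ).choose (k - τ) := by
  classical
  intro d
  induction d with
  | zero =>
    intro A hAI hAc
    simpa using count_superset_le n k τ F hF A hAI (by omega)
  | succ d ih =>
    intro A hAI hAc
    have hlt : A.card < τ := by omega
    obtain ⟨W, hWF, hWlt⟩ : ∃ W ∈ F, (A ∩ W).card < t := by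
      by_contra h
      push_neg at h
      exact hmin A hAI hlt h
    obtain ⟨hWI, hWc⟩ := Finset.mem_powersetCard.mp (hF hWF)
    have hsub : F.filter (fun G => A ⊆ G) ⊆
        (W \ A).biUnion (fun w => F.filter (fun G => insert w A ⊆ G)) := by
      intro G hG
      simp only [mem_filter] at hG
      have ht : t ≤ (G ∩ W).card := hint G hG.1 W hWF
      have hAWsub : A ∩ W ⊆ G ∩ W := Finset.inter_subset_inter hG.2 (Finset.Subset.refl W)
      have hnot : ¬ (G ∩ W ⊆ A ∩ W) := fun hc => by
        have := Finset.card_le_card hc; omega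
      obtain ⟨w, hw1, hw2⟩ := Finset.not_subset.mp hnot
      simp only [Finset.mem_inter] at hw1
      have hwA : w ∉ A := fun hwa => hw2 (Finset.mem_inter.mpr ⟨hwa, hw1.2⟩)
      refine Finset.mem_biUnion.mpr ⟨w, Finset.mem_sdiff.mpr ⟨hw1.2, hwA⟩, ?_⟩
      exact Finset.mem_filter.mpr ⟨hG.1, Finset.insert_subset hw1.1 hG.2⟩
    calc (F.filter (fun G => A ⊆ G)).card
        ≤ ((W \ A).biUnion (fun w => F.filter (fun G => insert w A ⊆ G))).card :=
          Finset.card_le_card hsub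
      _ ≤ ∑ w ∈ W \ A, (F.filter (fun G => insert w A ⊆ G)).card :=
          Finset.card_biUnion_le
      _ ≤ ∑ _w ∈ W \ A, k ^ d * (n - τ).choose (k - τ) := by
          apply Finset.sum_le_sum
          intro w hw
          simp only [Finset.mem_sdiff] at hw
          apply ih
          · exact Finset.insert_subset (hWI hw.1) hAI
          · rw [Finset.card_insert_of_notMem hw.2]; omega
      _ ≤ k * (k ^ d * (n - τ).choose (k - τ)) := by
          rw [Finset.sum_const, smul_eq_mul]
          apply Nat.mul_le_mul_right
          calc (W \ A).card ≤ W.card := Finset.card_le_card (Finset.sdiff_subset)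
            _ = k := hWc
      _ = k ^ (d + 1) * (n - τ).choose (k - τ) := by ring

lemma deg_bound (n k t τ : ℕ) (F : Finset (Finset ℕ))
    (hF : F ⊆ Finset.powersetCard k (Finset.Icc 1 n))
    (hint : ∀ A ∈ F, ∀ B ∈ F, t ≤ (A ∩ B).card)
    (hmin : ∀ A : Finset ℕ, A ⊆ Finset.Icc 1 n → A.card < τ →
      ¬ (∀ G ∈ F, t ≤ (A ∩ G).card))
    (T : Finset ℕ) (hTI : T ⊆ Finset.Icc 1 n) (hTc : T.card = τ)
    (hTt : ∀ A ∈ F, t ≤ (T ∩ A).card)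
    (ht1 : t + 1 ≤ τ)
    (x : ℕ) (hxI : x ∈ Finset.Icc 1 n) (hxT : x ∉ T) :
    degree F x ≤ τ.choose t * (k ^ (τ - t - 1) * (n - τ).choose (k - τ)) := by
  classical
  have hsub : F.filter (fun G => x ∈ G) ⊆
      (Finset.powersetCard t T).biUnion (fun S => F.filter (fun G => insert x S ⊆ G)) := by
    intro G hG
    simp only [mem_filter] at hG
    have htle : t ≤ (T ∩ G).card := hTt G hG.1
    obtain ⟨S, hS1, hS2⟩ := Finset.exists_subset_card_eq htle
    refine Finset.mem_biUnion.mpr ⟨S, ?_, ?_⟩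
    · exact Finset.mem_powersetCard.mpr ⟨hS1.trans Finset.inter_subset_left, hS2⟩
    · refine Finset.mem_filter.mpr ⟨hG.1, Finset.insert_subset hG.2
        (hS1.trans Finset.inter_subset_right)⟩
  calc degree F x = (F.filter (fun G => x ∈ G)).card := rfl
    _ ≤ ((Finset.powersetCard t T).biUnion
          (fun S => F.filter (fun G => insert x S ⊆ G))).card := Finset.card_le_card hsub
    _ ≤ ∑ S ∈ Finset.powersetCard t T, (F.filter (fun G => insert x S ⊆ G)).card :=
        Finset.card_biUnion_le
    _ ≤ ∑ _S ∈ Finset.powersetCard t T, k ^ (τ - t - 1) * (n - τ).choose (k - τ) := by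
        apply Finset.sum_le_sum
        intro S hS
        obtain ⟨hST, hSc⟩ := Finset.mem_powersetCard.mp hS
        have hxS : x ∉ S := fun hx => hxT (hST hx)
        apply branch n k t τ F hF hint hmin
        · exact Finset.insert_subset hxI (hST.trans hTI)
        · rw [Finset.card_insert_of_notMem hxS, hSc]; omega
    _ = τ.choose t * (k ^ (τ - t - 1) * (n - τ).choose (k - τ)) := by
        rw [Finset.sum_const, smul_eq_mul, Finset.card_powersetCard, hTc]

lemma L1 (t : ℕ) (ht : 1 ≤ t) : ∀ m : ℕ, 1 ≤ m →
    (t + 1 + m).choose t ≤ ((t + 2) * (t + 1) / 2) ^ m := by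
  intro m
  induction m with
  | zero => omega
  | succ m ih =>
    intro _
    by_cases hm : m = 0
    · subst hm
      have h1 : (t + 1 + 1).choose t = (t + 2).choose 2 := by
        have := Nat.choose_symm (n := t + 2) (k := 2) (by omega)
        simp only [show t + 2 - 2 = t by omega] at this
        rw [show t + 1 + 1 = t + 2 by omega, ← this]
      rw [h1, Nat.choose_two_right, pow_one]
      simp [show t + 2 - 1 = t + 1 by omega]
    · have hm1 : 1 ≤ m := by omega
      have ihm := ih hm1
      have key : (t + m + 2) * (t + 1 + m).choose t = (t + 1 + (m + 1)).choose t * (m + 2) := by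
        have h := Nat.add_one_mul_choose_eq (t + m + 1) (m + 1)
        have e1 : (t + m + 1).choose (m + 1) = (t + 1 + m).choose t := by
          have := Nat.choose_symm (n := t + m + 1) (k := m + 1) (by omega)
          simp only [show t + m + 1 - (m + 1) = t by omega] at this
          rw [← this]; congr 1; omega
        have e2 : (t + m + 1 + 1).choose (m + 1 + 1) = (t + 1 + (m + 1)).choose t := by
          have := Nat.choose_symm (n := t + m + 2) (k := m + 2) (by omega)
          simp only [show t + m + 2 - (m + 2) = t by omega] at this
          rw [show t + m + 1 + 1 = t + m + 2 by omega, show m + 1 + 1 = m + 2 by omega, ← this]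
          congr 1; omega
        rw [← e1, ← e2]
        calc (t + m + 2) * (t + m + 1).choose (m + 1)
            = (t + m + 1 + 1) * (t + m + 1).choose (m + 1) := by ring_nf
          _ = (t + m + 1 + 1).choose (m + 1 + 1) * (m + 1 + 1) := h
          _ = (t + m + 1 + 1).choose (m + 1 + 1) * (m + 2) := by ring_nf
      set Q := (t + 2) * (t + 1) / 2 with hQ
      have hQt : t + 2 ≤ Q := by
        rw [hQ, Nat.le_div_iff_mul_le (by omega)]
        nlinarith
      apply Nat.le_of_mul_le_mul_right _ (show 0 < m + 2 by omega)
      calc (t + 1 + (m + 1)).choose t * (m + 2)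
          = (t + m + 2) * (t + 1 + m).choose t := key.symm
        _ ≤ ((t + 2) * (m + 2)) * Q ^ m := by
            apply Nat.mul_le_mul _ ihm
            nlinarith
        _ ≤ (Q * (m + 2)) * Q ^ m := by
            apply Nat.mul_le_mul_right
            apply Nat.mul_le_mul_right
            omega
        _ = Q ^ (m + 1) * (m + 2) := by ring

lemma L3 (n k Q j : ℕ) (hQ : 1 ≤ Q) (hj : 1 ≤ j) (hjk : j + 1 ≤ k)
    (hn : Q * k ^ 2 ≤ n) :
    Q * k * ((n - (j + 1)).choose (k - (j + 1))) < (n - j).choose (k - j) := by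
  have hkn : k ≤ n := by nlinarith
  set a := n - j with ha
  set b := k - j with hb
  have hb1 : 1 ≤ b := by omega
  have hba : b ≤ a := by omega
  have ha1 : 1 ≤ a := by omega
  have hrw1 : n - (j + 1) = a - 1 := by omega
  have hrw2 : k - (j + 1) = b - 1 := by omega
  rw [hrw1, hrw2]
  have hcpos : 0 < (a - 1).choose (b - 1) := Nat.choose_pos (by omega)
  have hnum : Q * k * b < a := by
    have h1 : Q * k * (b + 1) ≤ Q * k * k := by
      apply Nat.mul_le_mul_left; omega
    have h2 : Q * k * k = Q * k ^ 2 := by ring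
    have h3 : j + 1 ≤ Q * k := by nlinarith
    have h4 : Q * k * b + Q * k ≤ n := by nlinarith
    omega
  have hid : a * (a - 1).choose (b - 1) = a.choose b * b := by
    have h := Nat.add_one_mul_choose_eq (a - 1) (b - 1)
    rw [show (a-1) + 1 = a by omega, show (b-1) + 1 = b by omega] at h
    exact h
  apply Nat.lt_of_mul_lt_mul_right (a := b)
  calc Q * k * (a - 1).choose (b - 1) * b
      = (Q * k * b) * (a - 1).choose (b - 1) := by ring
    _ < a * (a - 1).choose (b - 1) := by
        exact Nat.mul_lt_mul_of_lt_of_le hnum le_rfl hcpos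
    _ = a.choose b * b := hid

lemma L2 (n k t : ℕ) (ht : 1 ≤ t)
    (hn : (t + 2) * (t + 1) / 2 * k ^ 2 ≤ n) :
    ∀ m : ℕ, 1 ≤ m → t + 1 + m ≤ k →
    ((t + 2) * (t + 1) / 2) ^ m * (k ^ m * ((n - (t + 1 + m)).choose (k - (t + 1 + m))))
      < (n - (t + 1)).choose (k - (t + 1)) := by
  set Q := (t + 2) * (t + 1) / 2 with hQdef
  have hQ : 1 ≤ Q := by
    rw [hQdef, Nat.le_div_iff_mul_le (by omega)]; nlinarith
  intro m
  induction m with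
  | zero => omega
  | succ m ih =>
    intro _ hmk
    by_cases hm : m = 0
    · subst hm
      have := L3 n k Q (t + 1) hQ (by omega) (by omega) hn
      simpa [pow_one, mul_assoc] using this
    · have h1 : 1 ≤ m := by omega
      have step := L3 n k Q (t + 1 + m) hQ (by omega) (by omega) hn
      have ihm := ih h1 (by omega)
      calc Q ^ (m + 1) * (k ^ (m + 1) * ((n - (t + 1 + (m + 1))).choose (k - (t + 1 + (m + 1)))))
          = Q ^ m * k ^ m * (Q * k * ((n - (t + 1 + m + 1)).choose (k - (t + 1 + m + 1)))) := by
            rw [show t + 1 + (m + 1) = t + 1 + m + 1 by omega]; ring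
        _ ≤ Q ^ m * k ^ m * ((n - (t + 1 + m)).choose (k - (t + 1 + m))) := by
            apply Nat.mul_le_mul_left
            exact le_of_lt step
        _ = Q ^ m * (k ^ m * ((n - (t + 1 + m)).choose (k - (t + 1 + m)))) := by ring
        _ < (n - (t + 1)).choose (k - (t + 1)) := ihm

lemma nth_lt (n : ℕ) (F : Finset (Finset ℕ)) (τ B : ℕ) (hB : 0 < B)
    (hcount : ((Finset.Icc 1 n).filter (fun x => B ≤ degree F x)).card ≤ τ) :
    nthDegree n F (1 + τ) < B := by
  classical
  unfold nthDegree
  set M := (Finset.Icc 1 n).val.map (degree F) with hM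
  set l := M.sort (· ≥ ·) with hl
  rw [show 1 + τ - 1 = τ by omega]
  by_cases hlen : τ < l.length
  · by_contra hcon
    push_neg at hcon
    have hget : l.getD τ 0 = l[τ]'hlen := List.getD_eq_getElem l 0 hlen
    rw [hget] at hcon
    have hsorted : l.Pairwise (· ≥ ·) := Multiset.pairwise_sort _ _
    have hpair := List.pairwise_iff_getElem.mp hsorted
    have htake : ∀ a ∈ l.take (τ + 1), B ≤ a := by
      intro a ha
      obtain ⟨i, hi, hia⟩ := List.mem_iff_getElem.mp ha
      rw [List.length_take] at hi
      have hil : i < l.length := lt_of_lt_of_le (lt_min_iff.mp hi).2 le_rfl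
      rw [List.getElem_take] at hia
      subst hia
      rcases Nat.lt_or_ge i τ with h | h
      · exact le_trans hcon (hpair i τ hil hlen h)
      · have : i = τ := by omega
        subst this; exact hcon
    have hfiltake : ((l.take (τ + 1)).filter (fun d => B ≤ d)).length = τ + 1 := by
      rw [List.filter_eq_self.mpr (by intro a ha; simpa using htake a ha)]
      rw [List.length_take]; omega
    have hfl : τ + 1 ≤ (l.filter (fun d => B ≤ d)).length := by
      conv_rhs => rw [← List.take_append_drop (τ + 1) l]
      rw [List.filter_append, List.length_append, hfiltake]
      omega
    have hMl : (M.filter (fun d => B ≤ d)).card = (l.filter (fun d => B ≤ d)).length := by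
      have : (l : Multiset ℕ) = M := Multiset.sort_eq _ _
      rw [← this]
      simp
    have hMcard : (M.filter (fun d => B ≤ d)).card
        = ((Finset.Icc 1 n).filter (fun x => B ≤ degree F x)).card := by
      rw [hM, Multiset.filter_map]
      rw [Multiset.card_map]
      rfl
    omega
  · rw [List.getD_eq_default]
    · exact hB
    · omega

theorem stmt_19 (n k t : ℕ) (ht : 1 ≤ t) (htk : t < k)
    (hn : (t + 2) * (t + 1) / 2 * k ^ 2 ≤ n)
    (F : Finset (Finset ℕ)) (hF : F ⊆ Finset.powersetCard k (Finset.Icc 1 n))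
    (hne : F.Nonempty)
    (hint : ∀ A ∈ F, ∀ B ∈ F, t ≤ (A ∩ B).card)
    (hsat : ∀ G ∈ Finset.powersetCard k (Finset.Icc 1 n), G ∉ F →
      ¬ (∀ A ∈ insert G F, ∀ B ∈ insert G F, t ≤ (A ∩ B).card))
    (hτ : t + 2 ≤ tauT n t F) :
    nthDegree n F (1 + tauT n t F) < (n - t - 1).choose (k - t - 1) := by
  classical
  set τ := tauT n t F with hτdef
  set B := (n - t - 1).choose (k - t - 1) with hBdef
  set S : Set ℕ := {m : ℕ | ∃ T ⊆ Finset.Icc 1 n, T.card = m ∧ ∀ A ∈ F, t ≤ (T ∩ A).card}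
    with hSdef
  have hτS : τ = sInf S := rfl
  have hQ1 : 1 ≤ (t + 2) * (t + 1) / 2 := by
    rw [Nat.le_div_iff_mul_le (by omega)]; nlinarith
  have hk2 : 2 ≤ k := by omega
  have hkn : k ≤ n := by nlinarith
  -- k ∈ S
  obtain ⟨A₀, hA₀⟩ := hne
  obtain ⟨hA₀I, hA₀c⟩ := Finset.mem_powersetCard.mp (hF hA₀)
  have hkS : k ∈ S := ⟨A₀, hA₀I, hA₀c, fun A hA => hint A₀ hA₀ A hA⟩
  have hτk : τ ≤ k := by
    rw [hτS]; exact Nat.sInf_le hkS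
  obtain ⟨T, hTI, hTc, hTt⟩ : ∃ T ⊆ Finset.Icc 1 n, T.card = τ ∧ ∀ A ∈ F, t ≤ (T ∩ A).card := by
    have := Nat.sInf_mem (⟨k, hkS⟩ : S.Nonempty)
    rw [← hτS] at this
    exact this
  have hmin : ∀ A : Finset ℕ, A ⊆ Finset.Icc 1 n → A.card < τ →
      ¬ (∀ G ∈ F, t ≤ (A ∩ G).card) := by
    intro A hAI hAlt hall
    have : A.card ∈ S := ⟨A, hAI, rfl, hall⟩
    have := Nat.sInf_le this
    rw [← hτS] at this
    omega
  have hB0 : 0 < B := by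
    rw [hBdef]
    exact Nat.choose_pos (by omega)
  -- main degree bound outside T
  have hstep1 : ∀ x ∈ Finset.Icc 1 n, x ∉ T → degree F x < B := by
    intro x hxI hxT
    have hdb := deg_bound n k t τ F hF hint hmin T hTI hTc hTt (by omega) x hxI hxT
    set m := τ - t - 1 with hmdef
    have hm1 : 1 ≤ m := by omega
    have hτeq : τ = t + 1 + m := by omega
    have hL1 := L1 t ht m hm1
    have hL2 := L2 n k t ht hn m hm1 (by omega)
    calc degree F x ≤ τ.choose t * (k ^ (τ - t - 1) * (n - τ).choose (k - τ)) := hdb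
      _ = (t + 1 + m).choose t * (k ^ m * ((n - (t + 1 + m)).choose (k - (t + 1 + m)))) := by
          rw [← hτeq, ← hmdef]
      _ ≤ ((t + 2) * (t + 1) / 2) ^ m
            * (k ^ m * ((n - (t + 1 + m)).choose (k - (t + 1 + m)))) :=
          Nat.mul_le_mul_right _ hL1
      _ < (n - (t + 1)).choose (k - (t + 1)) := hL2
      _ = B := by rw [hBdef]; congr 1 <;> omega
  have hcount : ((Finset.Icc 1 n).filter (fun x => B ≤ degree F x)).card ≤ τ := by
    have hsub : (Finset.Icc 1 n).filter (fun x => B ≤ degree F x) ⊆ T := by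
      intro x hx
      simp only [mem_filter] at hx
      by_contra hxT
      have := hstep1 x hx.1 hxT
      omega
    calc ((Finset.Icc 1 n).filter (fun x => B ≤ degree F x)).card ≤ T.card :=
        Finset.card_le_card hsub
      _ = τ := hTc
  exact nth_lt n F τ B hB0 hcount
end
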